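/- arXiv:1207.4044 — 12 statements merged into one kernel-verified Lean document; each statement's English description precedes it below -/
import Mathlib

section
/- In the n-user flow control game with server capacity μ > 0 and type profile t with t_i > 0 for all i, the manager's utility U_0(d) = (μ − Σ_{j=1}^n d_j) · Π_{i=1}^n d_i^{t_i/n} over rate profiles d ∈ [0,μ]^n with Σ_{j=1}^n d_j ≤ μ attains its maximum at the unique profile d*(t) given by d*_i(t) = t_i μ / (n + Σ_{k=1}^n t_k). -/
/-- Strict weighted AM-GM in log form, via strict Jensen for `Real.log`. -/
lemma log_jensen_aux {m : ℕ} (w x : Fin m → ℝ) (hw : ∀ j, 0 < w j)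
    (hw1 : ∑ j, w j = 1) (hx : ∀ j, 0 < x j)
    (hne : ∃ j, ∃ k, x j ≠ x k) :
    ∑ j, w j * Real.log (x j) < Real.log (∑ j, w j * x j) := by
  have := strictConcaveOn_log_Ioi.lt_map_sum (t := Finset.univ) (w := w) (p := x)
    (fun j _ => hw j) hw1 (fun j _ => hx j)
    (by obtain ⟨j, k, h⟩ := hne; exact ⟨j, Finset.mem_univ j, k, Finset.mem_univ k, h⟩)
  simpa [smul_eq_mul] using this

/-- In the n-user flow control game with server capacity μ > 0 and type profile t with
t_i > 0 for all i, the manager's utility U_0(d) = (μ − Σ d_j) · Π d_i^(t_i/n) over rate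
profiles d ∈ [0,μ]^n with Σ d_j ≤ μ attains its maximum at the unique profile d*(t)
given by d*_i(t) = t_i μ / (n + Σ_k t_k). -/
theorem stmt_0 (n : ℕ) (hn : 1 ≤ n) (μ : ℝ) (hμ : 0 < μ)
    (t : Fin n → ℝ) (ht : ∀ i, 0 < t i)
    (dstar : Fin n → ℝ)
    (hdstar : ∀ i, dstar i = t i * μ / ((n : ℝ) + ∑ k, t k)) :
    (∀ i, dstar i ∈ Set.Icc (0 : ℝ) μ) ∧ (∑ j, dstar j) ≤ μ ∧
    ∀ d : Fin n → ℝ, (∀ i, d i ∈ Set.Icc (0 : ℝ) μ) → (∑ j, d j) ≤ μ → d ≠ dstar →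
      (μ - ∑ j, d j) * ∏ i, d i ^ (t i / (n : ℝ)) <
        (μ - ∑ j, dstar j) * ∏ i, dstar i ^ (t i / (n : ℝ)) := by
  have hn' : (0 : ℝ) < n := by
    have : 0 < n := Nat.lt_of_lt_of_le Nat.zero_lt_one hn
    exact_mod_cast this
  have htsum : (0 : ℝ) ≤ ∑ k, t k := Finset.sum_nonneg fun i _ => (ht i).le
  set S : ℝ := (n : ℝ) + ∑ k, t k with hSdef
  have hS : 0 < S := by rw [hSdef]; linarith
  have hti_le : ∀ i, t i ≤ ∑ k, t k := fun i =>
    Finset.single_le_sum (fun j _ => (ht j).le) (Finset.mem_univ i)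
  have hdpos : ∀ i, 0 < dstar i := fun i => by
    rw [hdstar i]; exact div_pos (mul_pos (ht i) hμ) hS
  have hsum_dstar : ∑ j, dstar j = (∑ k, t k) * μ / S := by
    simp only [hdstar]
    rw [← Finset.sum_div, ← Finset.sum_mul]
  have hgap : μ - ∑ j, dstar j = (n : ℝ) * μ / S := by
    rw [hsum_dstar, hSdef]; field_simp; ring
  have hgap_pos : 0 < μ - ∑ j, dstar j := by
    rw [hgap]; exact div_pos (mul_pos hn' hμ) hS
  refine ⟨fun i => ⟨(hdpos i).le, ?_⟩, ?_, ?_⟩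
  · rw [hdstar i, div_le_iff₀ hS, hSdef]
    nlinarith [hti_le i, (ht i).le]
  · rw [hsum_dstar, div_le_iff₀ hS, hSdef]
    nlinarith
  · intro d hd hsum hne
    have hRHSpos : 0 < (μ - ∑ j, dstar j) * ∏ i, dstar i ^ (t i / (n : ℝ)) := by
      apply mul_pos hgap_pos
      exact Finset.prod_pos fun i _ => Real.rpow_pos_of_pos (hdpos i) _
    by_cases hdeg : (∃ i, d i = 0) ∨ ∑ j, d j = μ
    · -- degenerate case: utility is 0
      have hLHS0 : (μ - ∑ j, d j) * ∏ i, d i ^ (t i / (n : ℝ)) ≤ 0 := by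
        rcases hdeg with ⟨i, hi⟩ | hs
        · have : ∏ i, d i ^ (t i / (n : ℝ)) = 0 := by
            apply Finset.prod_eq_zero (Finset.mem_univ i)
            rw [hi, Real.zero_rpow (ne_of_gt (div_pos (ht i) hn'))]
          rw [this, mul_zero]
        · rw [hs, sub_self, zero_mul]
      linarith
    · push_neg at hdeg
      obtain ⟨hd0, hsne⟩ := hdeg
      have hdipos : ∀ i, 0 < d i := fun i => lt_of_le_of_ne (hd i).1 (Ne.symm (hd0 i))
      have hgapd : 0 < μ - ∑ j, d j := by
        cases' lt_or_eq_of_le hsum with h h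
        · linarith
        · exact absurd h hsne
      -- the key strict inequality on logs
      have key : ∀ e : Fin n → ℝ, (∀ i, 0 < e i) → 0 < μ - ∑ j, e j →
          (∃ i, e i ≠ t i * μ / S) →
          (n : ℝ) / S * Real.log ((μ - ∑ j, e j) * S / n)
            + ∑ i, t i / S * Real.log (e i * S / t i) < Real.log μ := by
        intro e he hge hene
        set w : Fin (n + 1) → ℝ := Fin.snoc (fun i => t i / S) ((n : ℝ) / S) with hw
        set x : Fin (n + 1) → ℝ := Fin.snoc (fun i => e i * S / t i)
          ((μ - ∑ j, e j) * S / n) with hx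
        have hwpos : ∀ j, 0 < w j := by
          intro j
          refine Fin.lastCases ?_ (fun i => ?_) j
          · simp only [hw, Fin.snoc_last]; exact div_pos hn' hS
          · simp only [hw, Fin.snoc_castSucc]; exact div_pos (ht i) hS
        have hw1 : ∑ j, w j = 1 := by
          rw [Fin.sum_univ_castSucc]
          simp only [hw, Fin.snoc_castSucc, Fin.snoc_last]
          rw [← Finset.sum_div]
          field_simp
          rw [hSdef]; ring
        have hxpos : ∀ j, 0 < x j := by
          intro j
          refine Fin.lastCases ?_ (fun i => ?_) j
          · simp only [hx, Fin.snoc_last]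
            exact div_pos (mul_pos hge hS) hn'
          · simp only [hx, Fin.snoc_castSucc]
            exact div_pos (mul_pos (he i) hS) (ht i)
        have hwx : ∑ j, w j * x j = μ := by
          rw [Fin.sum_univ_castSucc]
          simp only [hw, hx, Fin.snoc_castSucc, Fin.snoc_last]
          have h1 : ∀ i, t i / S * (e i * S / t i) = e i := by
            intro i
            have h' : t i / S * (e i * S / t i) = e i * (S / S) * (t i / t i) := by ring
            rw [h', div_self hS.ne', div_self (ht i).ne', mul_one, mul_one]
          rw [Finset.sum_congr rfl fun i _ => h1 i]
          field_simp
          ring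
        have hxne : ∃ j, ∃ k, x j ≠ x k := by
          by_contra hcon
          push_neg at hcon
          obtain ⟨i0, hi0⟩ := hene
          have hconst : ∀ j, x j = x (Fin.last n) := fun j => hcon j (Fin.last n)
          have hxl : x (Fin.last n) = μ := by
            have h2 : ∑ j, w j * x j = (∑ j, w j) * x (Fin.last n) := by
              rw [Finset.sum_mul]
              exact Finset.sum_congr rfl fun j _ => by rw [hconst j]
            rw [hwx, hw1, one_mul] at h2
            exact h2.symm
          have h3 : x (Fin.castSucc i0) = μ := (hconst _).trans hxl
          simp only [hx, Fin.snoc_castSucc] at h3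
          apply hi0
          rw [div_eq_iff (ne_of_gt (ht i0))] at h3
          rw [eq_div_iff (ne_of_gt hS)]
          linarith [h3]
        have hJ := log_jensen_aux w x hwpos hw1 hxpos hxne
        rw [hwx] at hJ
        rw [Fin.sum_univ_castSucc] at hJ
        simp only [hw, hx, Fin.snoc_castSucc, Fin.snoc_last] at hJ
        linarith [hJ]
      -- apply `key` to d and compute equality for dstar
      have hdne : ∃ i, d i ≠ t i * μ / S := by
        by_contra hcon
        push_neg at hcon
        exact hne (funext fun i => (hcon i).trans (hdstar i).symm)
      have hkey := key d hdipos hgapd hdne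
      have hstar_eq : (n : ℝ) / S * Real.log ((μ - ∑ j, dstar j) * S / n)
          + ∑ i, t i / S * Real.log (dstar i * S / t i) = Real.log μ := by
        have h1 : (μ - ∑ j, dstar j) * S / n = μ := by
          rw [hgap]
          have h' : (n : ℝ) * μ / S * S / n = μ * (S / S) * ((n : ℝ) / n) := by ring
          rw [h', div_self hS.ne', div_self hn'.ne', mul_one, mul_one]
        have h2 : ∀ i, dstar i * S / t i = μ := by
          intro i; rw [hdstar i]
          have h' : t i * μ / S * S / t i = μ * (S / S) * (t i / t i) := by ring
          rw [h', div_self hS.ne', div_self (ht i).ne', mul_one, mul_one]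
        rw [h1, Finset.sum_congr rfl fun i _ => by rw [h2 i]]
        rw [← Finset.sum_mul, ← add_mul, ← Finset.sum_div]
        have h3 : (n : ℝ) / S + (∑ i, t i) / S = 1 := by
          rw [← add_div, ← hSdef]
          exact div_self hS.ne'
        rw [h3, one_mul]
      rw [← hstar_eq] at hkey
      -- expand the logs of products
      have expand : ∀ e : Fin n → ℝ, (∀ i, 0 < e i) → 0 < μ - ∑ j, e j →
          (n : ℝ) / S * Real.log ((μ - ∑ j, e j) * S / n)
            + ∑ i, t i / S * Real.log (e i * S / t i)
          = (n : ℝ) / S * (Real.log ((μ - ∑ j, e j) * ∏ i, e i ^ (t i / (n : ℝ))))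
            + ((n : ℝ) / S * Real.log (S / n) + ∑ i, t i / S * Real.log (S / t i)) := by
        intro e he hge
        have hprodpos : ∀ i, (0:ℝ) < e i ^ (t i / (n : ℝ)) :=
          fun i => Real.rpow_pos_of_pos (he i) _
        have hA : Real.log ((μ - ∑ j, e j) * S / (n : ℝ))
            = Real.log (μ - ∑ j, e j) + Real.log (S / (n : ℝ)) := by
          rw [mul_div_assoc]
          exact Real.log_mul (ne_of_gt hge) (ne_of_gt (div_pos hS hn'))
        have hB : ∀ i, t i / S * Real.log (e i * S / t i)
            = t i / S * Real.log (e i) + t i / S * Real.log (S / t i) := by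
          intro i
          rw [mul_div_assoc, Real.log_mul (ne_of_gt (he i))
            (ne_of_gt (div_pos hS (ht i))), mul_add]
        have hC : Real.log ((μ - ∑ j, e j) * ∏ i, e i ^ (t i / (n : ℝ)))
            = Real.log (μ - ∑ j, e j) + ∑ i, t i / (n : ℝ) * Real.log (e i) := by
          rw [Real.log_mul (ne_of_gt hge)
            (ne_of_gt (Finset.prod_pos fun i _ => hprodpos i)),
            Real.log_prod (fun i _ => ne_of_gt (hprodpos i))]
          congr 1
          exact Finset.sum_congr rfl fun i _ => Real.log_rpow (he i) _
        have hsum_eq : ∑ i, t i / S * Real.log (e i)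
            = (n : ℝ) / S * ∑ i, t i / (n : ℝ) * Real.log (e i) := by
          rw [Finset.mul_sum]
          refine Finset.sum_congr rfl fun i _ => ?_
          field_simp
        rw [hA, hC, Finset.sum_congr rfl fun i _ => hB i, Finset.sum_add_distrib,
          hsum_eq]
        ring
      rw [expand d hdipos hgapd, expand dstar hdpos hgap_pos] at hkey
      have hlt : Real.log ((μ - ∑ j, d j) * ∏ i, d i ^ (t i / (n : ℝ)))
          < Real.log ((μ - ∑ j, dstar j) * ∏ i, dstar i ^ (t i / (n : ℝ))) := by
        have hns : 0 < (n : ℝ) / S := div_pos hn' hS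
        exact (mul_lt_mul_iff_right₀ hns).mp ((add_lt_add_iff_right _).mp hkey)
      have hLHSpos : 0 < (μ - ∑ j, d j) * ∏ i, d i ^ (t i / (n : ℝ)) :=
        mul_pos hgapd (Finset.prod_pos fun i _ => Real.rpow_pos_of_pos (hdipos i) _)
      exact (Real.log_lt_log_iff hLHSpos hRHSpos).mp hlt
end

section
/- In the n-user flow control game with server capacity μ > 0 and types t_i > 0, the profile d^{NE}(t) given by d^{NE}_i(t) = t_i μ / (1 + Σ_{k=1}^n t_k) is a Nash equilibrium: for each i, d^{NE}_i(t) maximizes x ↦ x^{t_i}(μ − x − Σ_{j≠i} d^{NE}_j(t)) over x ∈ [0, μ]. Moreover it is the unique Nash equilibrium: any profile d ∈ [0,μ]^n such that for each i, d_i maximizes x ↦ x^{t_i}(μ − x − Σ_{j≠i} d_j) over [0, μ] equals d^{NE}(t). -/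
open Real

lemma amgm_strict {t c x : ℝ} (ht : 0 < t) (hc : 0 < c) (hx : 0 ≤ x)
    (hne : x ≠ t * c / (1 + t)) :
    x ^ t * (c - x) < (t * c / (1 + t)) ^ t * (c / (1 + t)) := by
  have hT : (0:ℝ) < 1 + t := by linarith
  have hxs : 0 < t * c / (1 + t) := by positivity
  have hRHS : 0 < (t * c / (1 + t)) ^ t * (c / (1 + t)) := by positivity
  rcases eq_or_lt_of_le hx with h0 | hxpos
  · rw [← h0, Real.zero_rpow ht.ne', zero_mul]; exact hRHS
  rcases le_or_gt c x with hcx | hxc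
  · have : x ^ t * (c - x) ≤ 0 :=
      mul_nonpos_of_nonneg_of_nonpos (Real.rpow_nonneg hx t) (by linarith)
    linarith
  -- now 0 < x < c
  have hLHS : 0 < x ^ t * (c - x) := by
    have := Real.rpow_pos_of_pos hxpos t
    nlinarith
  rw [← Real.log_lt_log_iff hLHS hRHS]
  set a := x * (1 + t) / t with ha_def
  set b := (c - x) * (1 + t) with hb_def
  have ha : a ∈ Set.Ioi (0:ℝ) := by
    simp only [Set.mem_Ioi]; positivity
  have hb : b ∈ Set.Ioi (0:ℝ) := by
    simp only [Set.mem_Ioi]; nlinarith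
  have hab : a ≠ b := by
    intro h
    apply hne
    rw [ha_def, hb_def] at h
    field_simp at h ⊢
    nlinarith
  have hw1 : (0:ℝ) < t / (1 + t) := by positivity
  have hw2 : (0:ℝ) < 1 / (1 + t) := by positivity
  have hw : t / (1 + t) + 1 / (1 + t) = 1 := by field_simp; ring
  have hJ := strictConcaveOn_log_Ioi.2 ha hb hab hw1 hw2 hw
  simp only [smul_eq_mul] at hJ
  have hcomb : t / (1 + t) * a + 1 / (1 + t) * b = c := by
    rw [ha_def, hb_def]; field_simp; ring
  rw [hcomb] at hJ
  have hla : Real.log a = Real.log x + Real.log (1 + t) - Real.log t := by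
    rw [ha_def, Real.log_div (by positivity) ht.ne', Real.log_mul hxpos.ne' hT.ne']
  have hlb : Real.log b = Real.log (c - x) + Real.log (1 + t) := by
    rw [hb_def, Real.log_mul (by linarith : c - x ≠ 0) hT.ne']
  rw [hla, hlb] at hJ
  have hJ2 := mul_lt_mul_of_pos_left hJ hT
  have hexp : (1 + t) * (t / (1 + t) * (Real.log x + Real.log (1 + t) - Real.log t) +
      1 / (1 + t) * (Real.log (c - x) + Real.log (1 + t))) =
      t * Real.log x + t * Real.log (1 + t) - t * Real.log t +
        Real.log (c - x) + Real.log (1 + t) := by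
    field_simp; ring
  rw [hexp] at hJ2
  have hl1 : Real.log (x ^ t * (c - x)) = t * Real.log x + Real.log (c - x) := by
    rw [Real.log_mul (by positivity) (by linarith : c - x ≠ 0), Real.log_rpow hxpos]
  have hl2 : Real.log ((t * c / (1 + t)) ^ t * (c / (1 + t))) =
      t * (Real.log t + Real.log c - Real.log (1 + t)) +
        (Real.log c - Real.log (1 + t)) := by
    rw [Real.log_mul (by positivity) (by positivity), Real.log_rpow hxs,
      Real.log_div (by positivity) hT.ne', Real.log_div hc.ne' hT.ne',
      Real.log_mul ht.ne' hc.ne']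
  rw [hl1, hl2]
  linarith
lemma amgm_le {t c x : ℝ} (ht : 0 < t) (hc : 0 < c) (hx : 0 ≤ x) :
    x ^ t * (c - x) ≤ (t * c / (1 + t)) ^ t * (c / (1 + t)) := by
  by_cases hne : x = t * c / (1 + t)
  · subst hne
    have hT : (0:ℝ) < 1 + t := by linarith
    have : c - t * c / (1 + t) = c / (1 + t) := by field_simp; ring
    rw [this]
  · exact (amgm_strict ht hc hx hne).le

/-- In the n-user flow control game with server capacity μ > 0 and types t_i > 0, the
profile d^{NE}(t) given by d^{NE}_i(t) = t_i μ / (1 + Σ_k t_k) is a Nash equilibrium, and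
it is the unique Nash equilibrium among profiles in [0,μ]^n. -/
theorem stmt_2 (n : ℕ) (hn : 1 ≤ n) (μ : ℝ) (hμ : 0 < μ)
    (t : Fin n → ℝ) (ht : ∀ i, 0 < t i)
    (dNE : Fin n → ℝ) (hdNE : ∀ i, dNE i = t i * μ / (1 + ∑ k, t k)) :
    (∀ i, ∀ x ∈ Set.Icc (0 : ℝ) μ,
        x ^ t i * (μ - x - ∑ j ∈ Finset.univ.erase i, dNE j) ≤
          dNE i ^ t i * (μ - dNE i - ∑ j ∈ Finset.univ.erase i, dNE j)) ∧
    ∀ d : Fin n → ℝ, (∀ i, d i ∈ Set.Icc (0 : ℝ) μ) →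
      (∀ i, ∀ x ∈ Set.Icc (0 : ℝ) μ,
          x ^ t i * (μ - x - ∑ j ∈ Finset.univ.erase i, d j) ≤
            d i ^ t i * (μ - d i - ∑ j ∈ Finset.univ.erase i, d j)) →
      d = dNE := by
  have hne : (Finset.univ : Finset (Fin n)).Nonempty := by
    rw [Finset.univ_nonempty_iff]
    exact Fin.pos_iff_nonempty.mp hn
  set S := ∑ k, t k with hS_def
  have hS : 0 < S := Finset.sum_pos (fun i _ => ht i) hne
  have hT : (0:ℝ) < 1 + S := by linarith
  constructor
  · intro i x hx
    have hsumNE : ∑ j, dNE j = S * μ / (1 + S) := by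
      simp only [hdNE]
      rw [← Finset.sum_div, ← Finset.sum_mul]
    have herase : ∑ j ∈ Finset.univ.erase i, dNE j = S * μ / (1 + S) - dNE i := by
      rw [Finset.sum_erase_eq_sub (Finset.mem_univ i), hsumNE]
    have h1ti : (0:ℝ) < 1 + t i := by linarith [ht i]
    set c : ℝ := μ * (1 + t i) / (1 + S) with hc_def
    have hc : 0 < c := div_pos (mul_pos hμ h1ti) hT
    have hrw : ∀ y : ℝ, μ - y - ∑ j ∈ Finset.univ.erase i, dNE j = c - y := by
      intro y
      rw [herase, hdNE i, hc_def]
      field_simp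
      ring
    have e1 : t i * c / (1 + t i) = dNE i := by
      rw [hdNE i, hc_def]
      have h1 : (0:ℝ) < 1 + t i := by linarith [ht i]
      field_simp
    have e2 : c / (1 + t i) = c - dNE i := by
      rw [hdNE i, hc_def]
      have h1 : (0:ℝ) < 1 + t i := by linarith [ht i]
      field_simp
      ring
    rw [hrw x, hrw (dNE i)]
    calc x ^ t i * (c - x) ≤ (t i * c / (1 + t i)) ^ t i * (c / (1 + t i)) :=
          amgm_le (ht i) hc hx.1
      _ = dNE i ^ t i * (c - dNE i) := by rw [e1, e2]
  · intro d hd hmax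
    set D := ∑ j, d j with hD_def
    have herase : ∀ i, ∑ j ∈ Finset.univ.erase i, d j = D - d i := fun i =>
      Finset.sum_erase_eq_sub (Finset.mem_univ i)
    have hDd : ∀ i, d i ≤ D := by
      intro i
      have : 0 ≤ D - d i := by
        rw [← herase i]
        exact Finset.sum_nonneg fun j _ => (hd j).1
      linarith
    have hD0 : 0 ≤ D := Finset.sum_nonneg fun j _ => (hd j).1
    -- Step A : D < μ
    have hDμ : D < μ := by
      by_contra hcon
      push_neg at hcon
      have hnn : ∀ i, 0 ≤ d i ^ t i * (μ - D) := by
        intro i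
        have h0 := hmax i 0 ⟨le_refl 0, hμ.le⟩
        rw [Real.zero_rpow (ht i).ne', zero_mul, herase i] at h0
        have : μ - d i - (D - d i) = μ - D := by ring
        rwa [this] at h0
      rcases eq_or_lt_of_le hcon with heq | hlt
      · -- μ = D
        have hpos : ∃ i, 0 < d i := by
          by_contra hall
          push_neg at hall
          have : D = 0 := le_antisymm (heq ▸ (by
            have : D ≤ 0 := Finset.sum_nonpos fun j _ => hall j
            linarith)) hD0
          linarith [heq ▸ this]
        obtain ⟨i, hdi⟩ := hpos
        have hxin : d i / 2 ∈ Set.Icc (0:ℝ) μ :=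
          ⟨by linarith, by linarith [(hd i).2]⟩
        have h2 := hmax i (d i / 2) hxin
        rw [herase i] at h2
        have e1 : μ - d i / 2 - (D - d i) = d i / 2 := by rw [← heq]; ring
        have e2 : μ - d i - (D - d i) = 0 := by rw [← heq]; ring
        rw [e1, e2, mul_zero] at h2
        have : 0 < (d i / 2) ^ t i * (d i / 2) := by positivity
        linarith
      · -- μ < D
        have hall0 : ∀ i, d i = 0 := by
          intro i
          by_contra hdi
          have hdipos : 0 < d i := lt_of_le_of_ne (hd i).1 (Ne.symm hdi)
          have : d i ^ t i * (μ - D) < 0 :=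
            mul_neg_of_pos_of_neg (Real.rpow_pos_of_pos hdipos (t i)) (by linarith)
          linarith [hnn i]
        have : D = 0 := by
          rw [hD_def]
          exact Finset.sum_eq_zero fun j _ => hall0 j
        linarith
    -- Step B : each d i = t i * (μ - D)
    have hBR : ∀ i, d i = t i * (μ - D) := by
      intro i
      set c : ℝ := μ - D + d i with hc_def
      have hc : 0 < c := by linarith [(hd i).1]
      have hcμ : c ≤ μ := by linarith [hDd i]
      have hti : (0:ℝ) < 1 + t i := by linarith [ht i]
      set xs : ℝ := t i * c / (1 + t i) with hxs_def
      have hxs0 : 0 < xs := div_pos (mul_pos (ht i) hc) hti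
      have hxsc : xs ≤ c := by
        rw [hxs_def]
        rw [div_le_iff₀ hti]
        nlinarith
      have hxin : xs ∈ Set.Icc (0:ℝ) μ := ⟨hxs0.le, le_trans hxsc hcμ⟩
      have hrw : ∀ y : ℝ, μ - y - ∑ j ∈ Finset.univ.erase i, d j = c - y := by
        intro y
        rw [herase i, hc_def]
        ring
      have hmx := hmax i xs hxin
      rw [hrw xs, hrw (d i)] at hmx
      have hdeq : d i = xs := by
        by_contra hneq
        have hstrict := amgm_strict (ht i) hc (hd i).1 (by rwa [← hxs_def])
        rw [← hxs_def] at hstrict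
        have e2 : c - xs = c / (1 + t i) := by
          rw [hxs_def]; field_simp; ring
        rw [e2] at hmx
        linarith
      have h2 : d i * (1 + t i) = t i * c := by
        have h3 := hdeq
        rw [hxs_def] at h3
        rw [h3]
        field_simp
      rw [hc_def] at h2
      linear_combination h2
    -- Step C : conclude
    have hsum : D = S * (μ - D) := by
      calc D = ∑ j, t j * (μ - D) := Finset.sum_congr rfl fun i _ => hBR i
        _ = S * (μ - D) := by rw [← Finset.sum_mul]
    have hμD : μ - D = μ / (1 + S) := by
      rw [eq_div_iff hT.ne']
      nlinarith
    funext i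
    rw [hBR i, hμD, hdNE i]
    field_simp
end

section
/- Consider the Bayesian flow control game with n users, server capacity μ > 0, finite type set {τ_1, …, τ_m} with τ_l > 0, and type distribution P with P(τ_l) ≥ 0 and Σ_l P(τ_l) = 1, where a strategy for user i is a map d_i : {τ_1,…,τ_m} → [0, μ]. For each i let s_i = Σ_{j≠i} Σ_{k=1}^m P(τ_k) d_j(τ_k), and assume s_i < μ for all i. Then the strategy profile (d_1,…,d_n) is a Bayesian Nash equilibrium — i.e., for every i and every l, d_i(τ_l) maximizes x ↦ x^{τ_l}(μ − x − s_i) over x ∈ [0, μ] — if and only if for every i and every l: (1 + τ_l) d_i(τ_l) + τ_l · s_i = μ τ_l. -/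
open Real Set

lemma key (μ t s d : ℝ) (hμ : 0 < μ) (ht : 0 < t) (hs0 : 0 ≤ s) (hsμ : s < μ)
    (hd : d ∈ Set.Icc (0:ℝ) μ) :
    (∀ x ∈ Set.Icc (0:ℝ) μ, x ^ t * (μ - x - s) ≤ d ^ t * (μ - d - s)) ↔
      (1 + t) * d + t * s = μ * t := by
  have ht1 : (0:ℝ) < 1 + t := by linarith
  set c : ℝ := μ - s with hc
  have hc0 : 0 < c := by simp [hc]; linarith
  set a : ℝ := t * c / (1 + t) with ha
  have ha0 : 0 < a := by positivity
  have hac : a < c := by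
    rw [ha, div_lt_iff₀ ht1]; nlinarith
  have haμ : a < μ := by linarith
  -- derivative of f at positive x
  have hderiv : ∀ x : ℝ, 0 < x →
      HasDerivAt (fun x => x ^ t * (μ - x - s)) (x ^ (t-1) * (t * c - (1+t) * x)) x := by
    intro x hx
    have h1 : HasDerivAt (fun x : ℝ => x ^ t) (t * x ^ (t-1)) x :=
      Real.hasDerivAt_rpow_const (Or.inl hx.ne')
    have h2 : HasDerivAt (fun x : ℝ => μ - x - s) (-1) x := by
      simpa using ((hasDerivAt_id x).const_sub μ).sub_const s
    have := h1.mul h2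
    refine this.congr_deriv ?_
    have hxt : x ^ t = x ^ (t-1) * x := by
      rw [← Real.rpow_add_one hx.ne' (t-1)]; ring_nf
    rw [hxt, hc]; ring
  constructor
  · -- max ⇒ equation
    intro hmax
    have hfa : 0 < a ^ t * (μ - a - s) := by
      apply mul_pos (Real.rpow_pos_of_pos ha0 t); linarith
    have hfd := hmax a ⟨ha0.le, haμ.le⟩
    have hfd' : 0 < d ^ t * (μ - d - s) := lt_of_lt_of_le hfa hfd
    have hd0 : 0 < d := by
      rcases lt_or_eq_of_le hd.1 with h | h
      · exact h
      · exfalso; rw [← h] at hfd'; simp [Real.zero_rpow ht.ne'] at hfd'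
    have hdc : d < c := by
      by_contra h
      push_neg at h
      have : d ^ t * (μ - d - s) ≤ 0 := by
        apply mul_nonpos_of_nonneg_of_nonpos (Real.rpow_pos_of_pos hd0 t).le
        linarith
      linarith
    have hdμ : d < μ := by linarith
    have hloc : IsLocalMax (fun x => x ^ t * (μ - x - s)) d := by
      have : Set.Icc (0:ℝ) μ ∈ nhds d :=
        Filter.mem_of_superset (isOpen_Ioo.mem_nhds ⟨hd0, hdμ⟩) Ioo_subset_Icc_self
      exact Filter.eventually_iff_exists_mem.2 ⟨_, this, fun x hx => hmax x hx⟩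
    have := hloc.hasDerivAt_eq_zero (hderiv d hd0)
    have hpow : (0:ℝ) < d ^ (t-1) := Real.rpow_pos_of_pos hd0 _
    have : t * c - (1+t) * d = 0 := by
      rcases mul_eq_zero.1 this with h | h
      · exact absurd h hpow.ne'
      · exact h
    rw [hc] at this; ring_nf; ring_nf at this; linarith
  · -- equation ⇒ max
    intro heq
    have hda : d = a := by
      rw [ha, eq_div_iff ht1.ne', hc]; ring_nf; ring_nf at heq; linarith
    subst hda
    intro x hx
    set f : ℝ → ℝ := fun x => x ^ t * (μ - x - s) with hf
    have hcont : Continuous f :=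
      (Real.continuous_rpow_const ht.le).mul (by continuity)
    rcases le_or_gt x a with hxd | hxd
    · -- monotone on [0, d]
      have hmono : StrictMonoOn f (Set.Icc 0 a) := by
        apply strictMonoOn_of_deriv_pos (convex_Icc _ _) hcont.continuousOn
        intro y hy
        rw [interior_Icc] at hy
        rw [(hderiv y hy.1).deriv]
        apply mul_pos (Real.rpow_pos_of_pos hy.1 _)
        have : y < t * c / (1+t) := hy.2
        rw [lt_div_iff₀ ht1] at this; linarith
      rcases eq_or_lt_of_le hxd with h | h
      · rw [h]
      · exact (hmono ⟨hx.1, hxd⟩ ⟨ha0.le, le_refl _⟩ h).le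
    · -- antitone on [d, μ]
      have hanti : StrictAntiOn f (Set.Icc a μ) := by
        apply strictAntiOn_of_deriv_neg (convex_Icc _ _) hcont.continuousOn
        intro y hy
        rw [interior_Icc] at hy
        rw [(hderiv y (ha0.trans hy.1)).deriv]
        have hy0 : 0 < y := ha0.trans hy.1
        apply mul_neg_of_pos_of_neg (Real.rpow_pos_of_pos hy0 _)
        have : t * c / (1+t) < y := hy.1
        rw [div_lt_iff₀ ht1] at this; linarith
      exact (hanti ⟨le_refl _, haμ.le⟩ ⟨hxd.le, hx.2⟩ hxd).le



/-- In the Bayesian flow control game, a strategy profile is a Bayesian Nash equilibrium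
if and only if it satisfies the first-order conditions
(1 + τ_l) d_i(τ_l) + τ_l s_i = μ τ_l for all i and l. -/
theorem stmt_4 (n m : ℕ) (μ : ℝ) (hμ : 0 < μ)
    (τ : Fin m → ℝ) (hτ : ∀ l, 0 < τ l)
    (P : Fin m → ℝ) (hP : ∀ l, 0 ≤ P l) (hPsum : ∑ l, P l = 1)
    (d : Fin n → Fin m → ℝ) (hd : ∀ i l, d i l ∈ Set.Icc (0 : ℝ) μ)
    (s : Fin n → ℝ)
    (hs : ∀ i, s i = ∑ j ∈ Finset.univ.erase i, ∑ k, P k * d j k)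
    (hsμ : ∀ i, s i < μ) :
    (∀ i l, ∀ x ∈ Set.Icc (0 : ℝ) μ,
        x ^ τ l * (μ - x - s i) ≤ d i l ^ τ l * (μ - d i l - s i)) ↔
    (∀ i l, (1 + τ l) * d i l + τ l * s i = μ * τ l) := by
  have hs0 : ∀ i, 0 ≤ s i := by
    intro i
    rw [hs i]
    apply Finset.sum_nonneg; intro j _
    apply Finset.sum_nonneg; intro k _
    exact mul_nonneg (hP k) (hd j k).1
  constructor
  · intro h i l
    exact (key μ (τ l) (s i) (d i l) hμ (hτ l) (hs0 i) (hsμ i) (hd i l)).1 (h i l)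
  · intro h i l
    exact (key μ (τ l) (s i) (d i l) hμ (hτ l) (hs0 i) (hsμ i) (hd i l)).2 (h i l)
end

section
/- Let n ≥ 1, let τ_1, …, τ_m > 0, let P(τ_1), …, P(τ_m) > 0 with Σ_l P(τ_l) = 1, let Λ = diag(1+τ_1, …, 1+τ_m), τ the column vector (τ_1,…,τ_m)^T, P the row vector (P(τ_1),…,P(τ_m)), s = Σ_l P(τ_l) τ_l/(1+τ_l), β = 1/(s−1), and γ = n/(1+(n−1)s). Let A be the (nm)×(nm) real matrix indexed by pairs (i,l) ∈ {1,…,n}×{1,…,m} with entry A[(i,l),(j,k)] equal to (1+τ_l) if i=j and l=k, equal to 0 if i=j and l≠k, and equal to τ_l P(τ_k) if i≠j. Set B = Λ^{-1} − β Λ^{-1} τ P Λ^{-1} and C = B · (I − γ τ P Λ^{-1}) · (τ P) · B, and let M be the (nm)×(nm) matrix with M[(i,l),(j,k)] = B[l,k]·[i=j] − C[l,k]. Then A · M = I, i.e., M is the inverse of A. -/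
open Kronecker Matrix

lemma sub_kron {l m n p : Type*} (A₁ A₂ : Matrix l m ℝ) (B : Matrix n p ℝ) :
    (A₁ - A₂) ⊗ₖ B = A₁ ⊗ₖ B - A₂ ⊗ₖ B := by
  ext ⟨i, j⟩ ⟨a, b⟩
  simp [Matrix.kroneckerMap_apply, sub_mul]

lemma kron_sub {l m n p : Type*} (A : Matrix l m ℝ) (B₁ B₂ : Matrix n p ℝ) :
    A ⊗ₖ (B₁ - B₂) = A ⊗ₖ B₁ - A ⊗ₖ B₂ := by
  ext ⟨i, j⟩ ⟨a, b⟩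
  simp [Matrix.kroneckerMap_apply, mul_sub]

/-- The block matrix A of the first-order conditions of the Bayesian flow control game
has inverse M given blockwise by M[(i,l),(j,k)] = B[l,k]·[i=j] − C[l,k], where
B = Λ^{-1} − β Λ^{-1} τ P Λ^{-1} and C = B (I − γ τPΛ^{-1}) (τP) B. -/
theorem stmt_7 (n m : ℕ) (hn : 1 ≤ n) (τ P : Fin m → ℝ)
    (hτ : ∀ l, 0 < τ l) (hP : ∀ l, 0 < P l) (hPsum : ∑ l, P l = 1)
    (s β γ : ℝ) (hs : s = ∑ l, P l * (τ l / (1 + τ l)))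
    (hβ : β = 1 / (s - 1)) (hγ : γ = (n : ℝ) / (1 + ((n : ℝ) - 1) * s))
    (Λinv tP B C : Matrix (Fin m) (Fin m) ℝ)
    (hΛinv : Λinv = Matrix.diagonal fun l => (1 + τ l)⁻¹)
    (htP : tP = Matrix.of fun l k => τ l * P k)
    (hB : B = Λinv - β • (Λinv * tP * Λinv))
    (hC : C = B * (1 - γ • (tP * Λinv)) * tP * B)
    (A M : Matrix (Fin n × Fin m) (Fin n × Fin m) ℝ)
    (hA : A = Matrix.of fun p q =>
        if p.1 = q.1 then (if p.2 = q.2 then 1 + τ p.2 else 0) else τ p.2 * P q.2)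
    (hM : M = Matrix.of fun p q =>
        (if p.1 = q.1 then B p.2 q.2 else 0) - C p.2 q.2) :
    A * M = 1 := by
  -- scalar preliminaries
  have h1τ : ∀ l, (0:ℝ) < 1 + τ l := fun l => by linarith [hτ l]
  have hm : 0 < m := by
    rcases Nat.eq_zero_or_pos m with h | h
    · subst h; simp at hPsum
    · exact h
  have hs0 : 0 ≤ s := by
    rw [hs]
    apply Finset.sum_nonneg
    intro l _
    have := (hP l).le
    have := (hτ l).le
    positivity
  have hs1 : s < 1 := by
    have : s < ∑ l, P l := by
      rw [hs]
      apply Finset.sum_lt_sum_of_nonempty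
      · exact Finset.univ_nonempty_iff.mpr ⟨⟨0, hm⟩⟩
      · intro l _
        have h1 : τ l / (1 + τ l) < 1 := (div_lt_one (h1τ l)).mpr (by linarith [hτ l])
        nlinarith [hP l]
    rwa [hPsum] at this
  have hs1ne : s - 1 ≠ 0 := by linarith
  have hd : (0:ℝ) < 1 + ((n:ℝ) - 1) * s := by
    have hn' : (1:ℝ) ≤ (n:ℝ) := by exact_mod_cast hn
    nlinarith
  have hdne : 1 + ((n:ℝ) - 1) * s ≠ 0 := hd.ne'
  have c1 : (1:ℝ) - β * s = -β := by rw [hβ]; field_simp; ring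
  have c2 : (1 - γ * s) * β ^ 2 * (1 + ((n:ℝ) - 1) * s) = -β := by
    rw [hβ, hγ]; field_simp; ring
  -- matrix preliminaries on the m-blocks
  set L : Matrix (Fin m) (Fin m) ℝ := Matrix.diagonal fun l => 1 + τ l with hL
  have hLΛ : L * Λinv = 1 := by
    rw [hL, hΛinv, Matrix.diagonal_mul_diagonal]
    have : ∀ i, (1 + τ i) * (1 + τ i)⁻¹ = 1 := fun i => mul_inv_cancel₀ (h1τ i).ne'
    simp [this]
  have hK : tP * Λinv * tP = s • tP := by
    ext l k
    simp only [htP, hΛinv, Matrix.mul_apply, Matrix.smul_apply, Matrix.of_apply,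
      Matrix.diagonal_apply, smul_eq_mul, hs]
    rw [Finset.sum_mul]
    refine Finset.sum_congr rfl fun j _ => ?_
    rw [Finset.sum_eq_single j (by intro b _ hb; simp [hb]) (by simp)]
    simp [div_eq_mul_inv]
    ring
  have f1 : tP * B = (-β) • (tP * Λinv) := by
    rw [hB, Matrix.mul_sub, Matrix.mul_smul]
    rw [show tP * (Λinv * tP * Λinv) = (tP * Λinv * tP) * Λinv by
      simp only [Matrix.mul_assoc]]
    rw [hK, Matrix.smul_mul, smul_smul]
    nth_rewrite 1 [← one_smul ℝ (tP * Λinv)]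
    rw [← sub_smul, c1]
  have f2 : L * B = 1 - β • (tP * Λinv) := by
    rw [hB, Matrix.mul_sub, Matrix.mul_smul]
    rw [show L * (Λinv * tP * Λinv) = (L * Λinv) * (tP * Λinv) by
      simp only [Matrix.mul_assoc], hLΛ, Matrix.one_mul]
  have key1 : L * B - tP * B = 1 := by
    rw [f2, f1, neg_smul]; abel
  -- closed form for C
  have hBtP : B * tP = (-β) • (Λinv * tP) := by
    rw [hB, Matrix.sub_mul, Matrix.smul_mul]
    rw [show Λinv * tP * Λinv * tP = Λinv * (tP * Λinv * tP) by
      simp only [Matrix.mul_assoc], hK, Matrix.mul_smul, smul_smul]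
    nth_rewrite 1 [← one_smul ℝ (Λinv * tP)]
    rw [← sub_smul, c1]
  have hC' : C = ((1 - γ * s) * β ^ 2) • (Λinv * tP * Λinv) := by
    rw [hC]
    rw [show B * (1 - γ • (tP * Λinv)) * tP = B * ((1 - γ • (tP * Λinv)) * tP) by
      simp only [Matrix.mul_assoc]]
    rw [Matrix.sub_mul, Matrix.one_mul, Matrix.smul_mul]
    rw [show tP * Λinv * tP = s • tP from hK, smul_smul]
    rw [Matrix.mul_sub, Matrix.mul_smul, hBtP]
    rw [show ((γ * s) • ((-β) • (Λinv * tP))) = (γ * s * (-β)) • (Λinv * tP) by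
      rw [smul_smul]]
    rw [← sub_smul, Matrix.smul_mul]
    rw [show Λinv * tP * B = Λinv * (tP * B) by simp only [Matrix.mul_assoc], f1,
      Matrix.mul_smul, smul_smul]
    rw [show Λinv * (tP * Λinv) = Λinv * tP * Λinv by simp only [Matrix.mul_assoc]]
    congr 1
    ring
  have f5 : L * C = ((1 - γ * s) * β ^ 2) • (tP * Λinv) := by
    rw [hC', Matrix.mul_smul]
    rw [show L * (Λinv * tP * Λinv) = (L * Λinv) * (tP * Λinv) by
      simp only [Matrix.mul_assoc], hLΛ, Matrix.one_mul]
  have f6 : tP * C = ((1 - γ * s) * β ^ 2 * s) • (tP * Λinv) := by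
    rw [hC', Matrix.mul_smul]
    rw [show tP * (Λinv * tP * Λinv) = (tP * Λinv * tP) * Λinv by
      simp only [Matrix.mul_assoc], hK, Matrix.smul_mul, smul_smul]
  have key2 : L * C + ((n:ℝ) - 1) • (tP * C) = tP * B := by
    rw [f1, f5, f6, smul_smul, ← add_smul]
    congr 1
    nlinarith [c2]
  -- Kronecker decomposition
  set J : Matrix (Fin n) (Fin n) ℝ := Matrix.of fun _ _ => (1:ℝ) with hJ
  have hJJ : J * J = (n:ℝ) • J := by
    ext i j
    simp [hJ, Matrix.mul_apply]
  have hA' : A = 1 ⊗ₖ L + (J ⊗ₖ tP - 1 ⊗ₖ tP) := by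
    ext ⟨i, l⟩ ⟨j, k⟩
    simp only [hA, hJ, hL, htP, Matrix.of_apply, Matrix.add_apply, Matrix.sub_apply,
      Matrix.kroneckerMap_apply, Matrix.one_apply, Matrix.diagonal_apply]
    by_cases hij : i = j <;> by_cases hlk : l = k <;> simp [hij, hlk]
  have hM' : M = 1 ⊗ₖ B - J ⊗ₖ C := by
    ext ⟨i, l⟩ ⟨j, k⟩
    simp only [hM, hJ, Matrix.of_apply, Matrix.sub_apply, Matrix.kroneckerMap_apply,
      Matrix.one_apply]
    by_cases hij : i = j <;> simp [hij]
  rw [hA', hM']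
  rw [add_mul, sub_mul, mul_sub, mul_sub, mul_sub]
  simp only [← Matrix.mul_kronecker_mul]
  simp only [Matrix.one_mul, Matrix.mul_one, hJJ, Matrix.smul_kronecker]
  have e1 : L * B = 1 + tP * B := by rw [← key1]; abel
  have e2 : L * C = tP * B - ((n:ℝ) - 1) • (tP * C) := by rw [← key2]; abel
  rw [e1, e2, Matrix.kronecker_add, kron_sub, Matrix.kronecker_smul,
    Matrix.one_kronecker_one, sub_smul, one_smul]
  abel
end

section
/- Let n ≥ 1, μ > 0, let τ_1, …, τ_m > 0 with τ_l ≤ n for all l, and let P(τ_1), …, P(τ_m) > 0 with Σ_l P(τ_l) = 1. Then the function f(d) = − ln(μ − Σ_{i=1}^n d_i) − Σ_{i=1}^n ln( Σ_{l=1}^m P(τ_l) d_i^{τ_l/n} ) is convex on the convex open set { d ∈ ℝ^n : d_i > 0 for all i and Σ_{i=1}^n d_i < μ }. -/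
open Finset

private lemma convexOn_finset_sum {E : Type*} [AddCommMonoid E] [Module ℝ E]
    {ι : Type*} (t : Finset ι) {s : Set E} (hs : Convex ℝ s) {f : ι → E → ℝ}
    (h : ∀ i ∈ t, ConvexOn ℝ s (f i)) :
    ConvexOn ℝ s (fun x => ∑ i ∈ t, f i x) := by
  classical
  induction t using Finset.cons_induction with
  | empty => simpa using convexOn_const 0 hs
  | cons a t ha ih =>
    simp only [Finset.sum_cons]
    exact (h a (Finset.mem_cons_self a t)).add
      (ih fun i hi => h i (Finset.mem_cons_of_mem hi))

private lemma concaveOn_finset_sum {E : Type*} [AddCommMonoid E] [Module ℝ E]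
    {ι : Type*} (t : Finset ι) {s : Set E} (hs : Convex ℝ s) {f : ι → E → ℝ}
    (h : ∀ i ∈ t, ConcaveOn ℝ s (f i)) :
    ConcaveOn ℝ s (fun x => ∑ i ∈ t, f i x) := by
  have := convexOn_finset_sum t hs (f := fun i x => -(f i x))
    (fun i hi => (h i hi).neg)
  have h2 : ConcaveOn ℝ s (fun x => -∑ i ∈ t, -(f i x)) := this.neg
  simpa using h2

/-- `-log ∘ g` is convex when `g` is concave and positive. -/
private lemma neg_log_convexOn {E : Type*} [AddCommMonoid E] [Module ℝ E]
    {s : Set E} {g : E → ℝ} (hg : ConcaveOn ℝ s g) (hpos : ∀ x ∈ s, 0 < g x) :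
    ConvexOn ℝ s (fun x => -Real.log (g x)) := by
  refine ⟨hg.1, fun x hx y hy a b ha hb hab => ?_⟩
  have hgx := hpos x hx
  have hgy := hpos y hy
  have hcomb : 0 < a * g x + b * g y := by
    rcases eq_or_lt_of_le ha with h | h
    · have : b = 1 := by linarith
      rw [← h, this]; simpa using hgy
    · nlinarith
  have h1 : a * g x + b * g y ≤ g (a • x + b • y) := by
    have := hg.2 hx hy ha hb hab
    simpa [smul_eq_mul] using this
  have hlog1 : Real.log (a * g x + b * g y) ≤ Real.log (g (a • x + b • y)) :=
    Real.log_le_log hcomb h1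
  have hlog2 : a * Real.log (g x) + b * Real.log (g y)
      ≤ Real.log (a * g x + b * g y) := by
    have := (strictConcaveOn_log_Ioi.concaveOn).2
      (Set.mem_Ioi.2 hgx) (Set.mem_Ioi.2 hgy) ha hb hab
    simpa [smul_eq_mul] using this
  have := hlog2.trans hlog1
  simp only [smul_eq_mul]
  linarith

/-- The negative log of the manager's expected a-priori utility,
f(d) = − ln(μ − Σ_i d_i) − Σ_i ln( Σ_l P(τ_l) d_i^{τ_l/n} ), is convex on the set
{ d : d_i > 0 for all i and Σ_i d_i < μ }, provided τ_l ≤ n for all l. -/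
theorem stmt_9 (n m : ℕ) (hn : 1 ≤ n) (μ : ℝ) (hμ : 0 < μ)
    (τ : Fin m → ℝ) (hτ : ∀ l, 0 < τ l) (hτn : ∀ l, τ l ≤ (n : ℝ))
    (P : Fin m → ℝ) (hP : ∀ l, 0 < P l) (hPsum : ∑ l, P l = 1) :
    ConvexOn ℝ {d : Fin n → ℝ | (∀ i, 0 < d i) ∧ ∑ i, d i < μ}
      (fun d => - Real.log (μ - ∑ i, d i)
        - ∑ i, Real.log (∑ l, P l * d i ^ (τ l / (n : ℝ)))) := by
  have hnpos : (0 : ℝ) < (n : ℝ) := by exact_mod_cast hn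
  set S : Set (Fin n → ℝ) := {d : Fin n → ℝ | (∀ i, 0 < d i) ∧ ∑ i, d i < μ} with hS
  -- S is convex
  have hSconv : Convex ℝ S := by
    intro x hx y hy a b ha hb hab
    constructor
    · intro i
      have hxi := hx.1 i
      have hyi := hy.1 i
      simp only [Pi.add_apply, Pi.smul_apply, smul_eq_mul]
      rcases eq_or_lt_of_le ha with h | h
      · have hb1 : b = 1 := by linarith
        rw [← h, hb1]; simpa using hyi
      · nlinarith
    · have : ∑ i, (a • x + b • y) i = a * ∑ i, x i + b * ∑ i, y i := by
        simp [Finset.sum_add_distrib, Finset.mul_sum]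
      rw [this]
      have hx2 := hx.2
      have hy2 := hy.2
      rcases eq_or_lt_of_le ha with h | h
      · have hb1 : b = 1 := by linarith
        rw [← h, hb1]; simpa using hy2
      · nlinarith
  -- first term
  have hT1 : ConvexOn ℝ S (fun d => -Real.log (μ - ∑ i, d i)) := by
    apply neg_log_convexOn
    · refine ⟨hSconv, fun x hx y hy a b ha hb hab => ?_⟩
      have : ∑ i, (a • x + b • y) i = a * ∑ i, x i + b * ∑ i, y i := by
        simp [Finset.sum_add_distrib, Finset.mul_sum]
      simp only [smul_eq_mul, this]
      nlinarith [hab]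
    · intro x hx
      have := hx.2
      linarith
  -- inner terms
  have hTi : ∀ i : Fin n, ConvexOn ℝ S
      (fun d => -Real.log (∑ l, P l * d i ^ (τ l / (n : ℝ)))) := by
    intro i
    apply neg_log_convexOn
    · -- concavity of d ↦ ∑ l, P l * (d i) ^ (τ l / n)
      apply concaveOn_finset_sum _ hSconv
      intro l _
      refine ⟨hSconv, fun x hx y hy a b ha hb hab => ?_⟩
      have hα0 : 0 ≤ τ l / (n : ℝ) := le_of_lt (div_pos (hτ l) hnpos)
      have hα1 : τ l / (n : ℝ) ≤ 1 := (div_le_one hnpos).2 (hτn l)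
      have hrpow := (Real.concaveOn_rpow hα0 hα1).2
        (Set.mem_Ici.2 (hx.1 i).le) (Set.mem_Ici.2 (hy.1 i).le) ha hb hab
      simp only [smul_eq_mul] at hrpow ⊢
      have hPl := (hP l).le
      have heval : (a • x + b • y) i = a * x i + b * y i := by
        simp [smul_eq_mul]
      rw [heval]
      calc a * (P l * x i ^ (τ l / (n : ℝ))) + b * (P l * y i ^ (τ l / (n : ℝ)))
          = P l * (a * x i ^ (τ l / (n : ℝ)) + b * y i ^ (τ l / (n : ℝ))) := by ring
        _ ≤ P l * (a * x i + b * y i) ^ (τ l / (n : ℝ)) :=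
            mul_le_mul_of_nonneg_left hrpow hPl
    · intro x hx
      apply Finset.sum_pos
      · intro l _
        exact mul_pos (hP l) (Real.rpow_pos_of_pos (hx.1 i) _)
      · refine Finset.univ_nonempty_iff.2 ?_
        rcases Nat.eq_zero_or_pos m with h | h
        · subst h; simp at hPsum
        · exact Fin.pos_iff_nonempty.1 h
  -- combine
  have hsum : ConvexOn ℝ S
      (fun d => ∑ i, -Real.log (∑ l, P l * d i ^ (τ l / (n : ℝ)))) :=
    convexOn_finset_sum _ hSconv (fun i _ => hTi i)
  have := hT1.add hsum
  convert this using 2 with d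
  · rfl
  simp [sub_eq_add_neg, Finset.sum_neg_distrib]
end

section
/- Let n ≥ 1, μ > 0, and t_i > 0 for all i. Let d̃ ∈ ℝ^n satisfy d̃_i > 0 and d̃_i ≤ d^{NE}_i(t) = t_i μ / (1 + Σ_{k=1}^n t_k) for all i. Let c_i ≥ ( t_i (μ − Σ_{k=1}^n d̃_k) − d̃_i ) / d̃_i for all i and let d₀^M ≥ c_i ( t_i (μ − Σ_{k=1}^n d̃_k) − d̃_i ) / (1 + t_i(1 + c_i)) for all i. Define the affine intervention rule f(d) = min{ max{ Σ_{k=1}^n c_k (d_k − d̃_k), 0 }, d₀^M }. Then f(d̃) = 0, and d̃ is a Nash equilibrium of the intervened game: for every i and every x ∈ [0, μ], d̃_i^{t_i} (μ − Σ_{k=1}^n d̃_k) ≥ x^{t_i} ( μ − x − Σ_{k≠i} d̃_k − f(x, d̃_{-i}) ), where (x, d̃_{-i}) is the profile obtained from d̃ by replacing d̃_i with x. -/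
lemma anti_lem (t K L m : ℝ) (ht : 0 < t) (hL : 0 < L) (hm : 0 ≤ m)
    (hthr : t * K ≤ (1 + t) * L * m) :
    AntitoneOn (fun x : ℝ => x ^ t * (K - L * x)) (Set.Ici m) := by
  have hderiv : ∀ x : ℝ, 0 < x → HasDerivAt (fun x : ℝ => x ^ t * (K - L * x))
      (t * x ^ (t - 1) * (K - L * x) + x ^ t * (-L)) x := by
    intro x hx
    have h1 : HasDerivAt (fun x : ℝ => x ^ t) (t * x ^ (t - 1)) x :=
      Real.hasDerivAt_rpow_const (Or.inl hx.ne')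
    have h2 : HasDerivAt (fun x : ℝ => K - L * x) (-L) x := by
      simpa using ((hasDerivAt_id x).const_mul L).const_sub K
    exact h1.mul h2
  apply antitoneOn_of_deriv_nonpos (convex_Ici m)
  · apply ContinuousOn.mul
    · exact (continuousOn_id.rpow_const (fun x _ => Or.inr ht.le))
    · fun_prop
  · intro x hx
    rw [interior_Ici] at hx
    exact ((hderiv x (lt_of_le_of_lt hm hx)).differentiableAt).differentiableWithinAt
  · intro x hx
    rw [interior_Ici] at hx
    have hx0 : 0 < x := lt_of_le_of_lt hm hx
    rw [(hderiv x hx0).deriv]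
    have hxt : x ^ t = x ^ (t - 1) * x := by
      rw [← Real.rpow_add_one hx0.ne' (t - 1)]; ring_nf
    have e : t * x ^ (t - 1) * (K - L * x) + x ^ t * (-L)
        = x ^ (t - 1) * (t * K - (1 + t) * L * x) := by rw [hxt]; ring
    rw [e]
    apply mul_nonpos_of_nonneg_of_nonpos (Real.rpow_nonneg hx0.le _)
    have : (1 + t) * L * m ≤ (1 + t) * L * x := by
      apply mul_le_mul_of_nonneg_left hx.le
      positivity
    linarith

lemma mono_lem (t K : ℝ) (ht : 0 < t) :
    MonotoneOn (fun x : ℝ => x ^ t * (K - x)) (Set.Icc 0 (t * K / (1 + t))) := by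
  have hderiv : ∀ x : ℝ, 0 < x → HasDerivAt (fun x : ℝ => x ^ t * (K - x))
      (t * x ^ (t - 1) * (K - x) + x ^ t * (-1)) x := by
    intro x hx
    have h1 : HasDerivAt (fun x : ℝ => x ^ t) (t * x ^ (t - 1)) x :=
      Real.hasDerivAt_rpow_const (Or.inl hx.ne')
    have h2 : HasDerivAt (fun x : ℝ => K - x) (-1) x := by
      simpa using (hasDerivAt_id x).const_sub K
    exact h1.mul h2
  apply monotoneOn_of_deriv_nonneg (convex_Icc _ _)
  · apply ContinuousOn.mul
    · exact (continuousOn_id.rpow_const (fun x _ => Or.inr ht.le))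
    · fun_prop
  · intro x hx
    rw [interior_Icc] at hx
    exact ((hderiv x hx.1).differentiableAt).differentiableWithinAt
  · intro x hx
    rw [interior_Icc] at hx
    have hx0 : 0 < x := hx.1
    rw [(hderiv x hx0).deriv]
    have hxt : x ^ t = x ^ (t - 1) * x := by
      rw [← Real.rpow_add_one hx0.ne' (t - 1)]; ring_nf
    have e : t * x ^ (t - 1) * (K - x) + x ^ t * (-1)
        = x ^ (t - 1) * (t * K - (1 + t) * x) := by rw [hxt]; ring
    rw [e]
    apply mul_nonneg (Real.rpow_nonneg hx0.le _)
    have h1t : (0:ℝ) < 1 + t := by linarith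
    have := hx.2
    rw [lt_div_iff₀ h1t] at this
    linarith

/-- If d̃ is a positive profile bounded above by the no-intervention Nash equilibrium,
the slopes c_i are large enough and the intervention capacity d₀^M is large enough, then
the affine intervention rule f(d) = min{max{Σ_k c_k (d_k − d̃_k), 0}, d₀^M} sustains d̃
without intervention: f(d̃) = 0 and d̃ is a Nash equilibrium of the intervened game. -/
theorem stmt_10 (n : ℕ) (hn : 1 ≤ n) (μ : ℝ) (hμ : 0 < μ)
    (t : Fin n → ℝ) (ht : ∀ i, 0 < t i)
    (dt : Fin n → ℝ) (hdtpos : ∀ i, 0 < dt i)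
    (hdtNE : ∀ i, dt i ≤ t i * μ / (1 + ∑ k, t k))
    (c : Fin n → ℝ)
    (hc : ∀ i, (t i * (μ - ∑ k, dt k) - dt i) / dt i ≤ c i)
    (d0M : ℝ)
    (hd0M : ∀ i, c i * (t i * (μ - ∑ k, dt k) - dt i) / (1 + t i * (1 + c i)) ≤ d0M)
    (f : (Fin n → ℝ) → ℝ)
    (hf : ∀ d, f d = min (max (∑ k, c k * (d k - dt k)) 0) d0M) :
    f dt = 0 ∧
    ∀ i, ∀ x ∈ Set.Icc (0 : ℝ) μ,
      x ^ t i * (μ - x - (∑ k ∈ Finset.univ.erase i, dt k) - f (Function.update dt i x)) ≤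
        dt i ^ t i * (μ - ∑ k, dt k) := by
  have hne : Nonempty (Fin n) := ⟨⟨0, hn⟩⟩
  set T := ∑ k, t k with hTdef
  set S := ∑ k, dt k with hSdef
  have hT : 0 < T := Finset.sum_pos (fun i _ => ht i) Finset.univ_nonempty
  have h1T : (0:ℝ) < 1 + T := by linarith
  have hS : S ≤ T * μ / (1 + T) := by
    calc S ≤ ∑ k, t k * μ / (1 + T) := Finset.sum_le_sum (fun i _ => hdtNE i)
    _ = T * μ / (1 + T) := by rw [← Finset.sum_div, ← Finset.sum_mul]
  have hμS : μ / (1 + T) ≤ μ - S := by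
    have e : μ - T * μ / (1 + T) = μ / (1 + T) := by field_simp; ring
    linarith
  have hμSpos : 0 < μ - S := lt_of_lt_of_le (div_pos hμ h1T) hμS
  have hA : ∀ i, 0 ≤ t i * (μ - S) - dt i := by
    intro i
    have h1 : t i * μ / (1 + T) ≤ t i * (μ - S) := by
      calc t i * μ / (1 + T) = t i * (μ / (1 + T)) := by ring
      _ ≤ t i * (μ - S) := mul_le_mul_of_nonneg_left hμS (ht i).le
    linarith [hdtNE i]
  have hcnn : ∀ i, 0 ≤ c i := fun i =>
    le_trans (div_nonneg (hA i) (hdtpos i).le) (hc i)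
  have hcA : ∀ i, t i * (μ - S) - dt i ≤ c i * dt i := by
    intro i
    have := (div_le_iff₀ (hdtpos i)).mp (hc i)
    linarith
  have hd0 : 0 ≤ d0M := by
    have i0 : Fin n := ⟨0, hn⟩
    have hden : (0:ℝ) < 1 + t i0 * (1 + c i0) := by nlinarith [ht i0, hcnn i0]
    exact le_trans (div_nonneg (mul_nonneg (hcnn i0) (hA i0)) hden.le) (hd0M i0)
  constructor
  · rw [hf]
    simp [hd0]
  · intro i x hx
    obtain ⟨hx0, hxμ⟩ := hx
    have hsum_upd : ∑ k, c k * (Function.update dt i x k - dt k) = c i * (x - dt i) := by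
      rw [Finset.sum_eq_single i]
      · simp
      · intro k _ hk; simp [Function.update_of_ne hk]
      · simp
    have herase : ∑ k ∈ Finset.univ.erase i, dt k = S - dt i := by
      have := Finset.add_sum_erase Finset.univ dt (Finset.mem_univ i)
      rw [hSdef]; linarith
    rw [hf, hsum_upd, herase]
    have h1t : (0:ℝ) < 1 + t i := by linarith [ht i]
    have hBdt : dt i ≤ t i * (μ - (S - dt i)) / (1 + t i) := by
      rw [le_div_iff₀ h1t]
      nlinarith [hA i]
    rcases le_or_gt x (dt i) with hcase | hcase
    · -- x ≤ dt i : no intervention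
      have hmax : max (c i * (x - dt i)) 0 = 0 :=
        max_eq_right (mul_nonpos_of_nonneg_of_nonpos (hcnn i) (by linarith))
      rw [hmax, min_eq_left hd0]
      have key := mono_lem (t i) (μ - (S - dt i)) (ht i)
        (a := x) (b := dt i) ⟨hx0, le_trans hcase hBdt⟩ ⟨(hdtpos i).le, hBdt⟩ hcase
      calc x ^ t i * (μ - x - (S - dt i) - 0) = x ^ t i * ((μ - (S - dt i)) - x) := by ring
      _ ≤ dt i ^ t i * ((μ - (S - dt i)) - dt i) := key
      _ = dt i ^ t i * (μ - S) := by ring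
    · -- dt i < x
      have hmax : max (c i * (x - dt i)) 0 = c i * (x - dt i) :=
        max_eq_left (mul_nonneg (hcnn i) (by linarith))
      rw [hmax]
      set K := (μ - (S - dt i)) + c i * dt i with hK
      set L := 1 + c i with hL
      have hLpos : 0 < L := by rw [hL]; linarith [hcnn i]
      have anti1 : AntitoneOn (fun y : ℝ => y ^ t i * (K - L * y)) (Set.Ici (dt i)) := by
        apply anti_lem _ _ _ _ (ht i) hLpos (hdtpos i).le
        rw [hK, hL]; nlinarith [hcA i]
      rcases le_or_gt (c i * (x - dt i)) d0M with h2a | h2b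
      · rw [min_eq_left h2a]
        have key := anti1 (Set.self_mem_Ici) (Set.mem_Ici.mpr hcase.le) hcase.le
        simp only at key
        calc x ^ t i * (μ - x - (S - dt i) - c i * (x - dt i))
            = x ^ t i * (K - L * x) := by rw [hK, hL]; ring
        _ ≤ dt i ^ t i * (K - L * dt i) := key
        _ = dt i ^ t i * (μ - S) := by rw [hK, hL]; ring
      · rw [min_eq_right h2b.le]
        have hcpos : 0 < c i := by
          rcases lt_or_eq_of_le (hcnn i) with h | h
          · exact h
          · exfalso; rw [← h] at h2b; simp at h2b; linarith
        set x₀ := dt i + d0M / c i with hx₀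
        have hdvnn : 0 ≤ d0M / c i := div_nonneg hd0 hcpos.le
        have hdtx₀ : dt i ≤ x₀ := by rw [hx₀]; linarith
        have hx₀nn : 0 ≤ x₀ := le_trans (hdtpos i).le hdtx₀
        have hx₀x : x₀ ≤ x := by
          have := (div_lt_iff₀ hcpos).mpr (by linarith [h2b] : d0M < (x - dt i) * c i)
          rw [hx₀]; linarith
        have hden : (0:ℝ) < 1 + t i * (1 + c i) := by nlinarith [ht i, hcpos]
        have hcAd : c i * (t i * (μ - S) - dt i) ≤ d0M * (1 + t i * (1 + c i)) := by
          have := (div_le_iff₀ hden).mp (hd0M i)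
          linarith
        have hcx₀ : c i * x₀ = c i * dt i + d0M := by
          rw [hx₀]; field_simp
        have thr : t i * ((μ - (S - dt i)) - d0M) ≤ (1 + t i) * 1 * x₀ := by
          rw [← mul_le_mul_iff_right₀ hcpos]
          calc c i * (t i * ((μ - (S - dt i)) - d0M))
              = t i * c i * ((μ - (S - dt i)) - d0M) := by ring
          _ ≤ (1 + t i) * (c i * dt i + d0M) := by nlinarith [hcAd]
          _ = c i * ((1 + t i) * 1 * x₀) := by linear_combination (-(1 + t i)) * hcx₀
        have anti2 : AntitoneOn (fun y : ℝ => y ^ t i * (((μ - (S - dt i)) - d0M) - 1 * y))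
            (Set.Ici x₀) := anti_lem _ _ _ _ (ht i) one_pos hx₀nn thr
        have key2 := anti2 (Set.self_mem_Ici) (Set.mem_Ici.mpr hx₀x) hx₀x
        simp only at key2
        have key1 := anti1 (Set.self_mem_Ici) (Set.mem_Ici.mpr hdtx₀) hdtx₀
        simp only at key1
        have einner : ((μ - (S - dt i)) - d0M) - 1 * x₀ = K - L * x₀ := by
          rw [hK, hL]; linear_combination hcx₀
        calc x ^ t i * (μ - x - (S - dt i) - d0M)
            = x ^ t i * (((μ - (S - dt i)) - d0M) - 1 * x) := by ring
        _ ≤ x₀ ^ t i * (((μ - (S - dt i)) - d0M) - 1 * x₀) := key2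
        _ = x₀ ^ t i * (K - L * x₀) := by rw [einner]
        _ ≤ dt i ^ t i * (K - L * dt i) := key1
        _ = dt i ^ t i * (μ - S) := by rw [hK, hL]; ring
end

section
/- Let n ≥ 1, μ > 0, τ_min > 0, and t_i ≥ τ_min for all i. Let d* be the profile d*_i = t_i μ / (n + Σ_{k=1}^n t_k). If d₀^M ≥ μ/(1 + τ_min) and c_i ≥ n − 1 for all i, then the affine intervention rule f(d) = min{ max{ Σ_{k=1}^n c_k (d_k − d*_k), 0 }, d₀^M } sustains d* without intervention: f(d*) = 0, and for every i and every x ∈ [0, μ], (d*_i)^{t_i} (μ − Σ_{k=1}^n d*_k) ≥ x^{t_i} ( μ − x − Σ_{k≠i} d*_k − f(x, d*_{-i}) ). -/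
open Real

lemma aux_hasDeriv (t B q : ℝ) (z : ℝ) (hz : 0 < z) :
    HasDerivAt (fun x : ℝ => x ^ t * (B - q * x))
      (z ^ (t - 1) * (t * B - (t + 1) * q * z)) z := by
  have h1 : HasDerivAt (fun x : ℝ => x ^ t) (t * z ^ (t - 1)) z :=
    Real.hasDerivAt_rpow_const (Or.inl hz.ne')
  have h2 : HasDerivAt (fun x : ℝ => B - q * x) (-q) z := by
    simpa using ((hasDerivAt_id z).const_mul q).const_sub B
  have := h1.mul h2
  refine this.congr_deriv ?_
  have hzz : z ^ t = z ^ (t - 1) * z := by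
    rw [← Real.rpow_add_one hz.ne' (t - 1)]; ring_nf
  rw [hzz]; ring

lemma aux_cont (t B q : ℝ) (ht : 0 < t) :
    Continuous (fun x : ℝ => x ^ t * (B - q * x)) := by
  exact (Real.continuous_rpow_const ht.le).mul (by continuity)

lemma aux_mono (t B q : ℝ) (ht : 0 < t) (hq : 0 ≤ q) {x y : ℝ}
    (hx : 0 ≤ x) (hxy : x ≤ y) (hy : (t + 1) * q * y ≤ t * B) :
    x ^ t * (B - q * x) ≤ y ^ t * (B - q * y) := by
  have hmono : MonotoneOn (fun x : ℝ => x ^ t * (B - q * x)) (Set.Icc x y) := by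
    apply monotoneOn_of_deriv_nonneg (convex_Icc x y) ((aux_cont t B q ht).continuousOn)
    · intro z hz
      rw [interior_Icc] at hz
      exact (aux_hasDeriv t B q z (hx.trans_lt hz.1)).differentiableAt.differentiableWithinAt
    · intro z hz
      rw [interior_Icc] at hz
      have hzpos : 0 < z := hx.trans_lt hz.1
      rw [(aux_hasDeriv t B q z hzpos).deriv]
      have : (t + 1) * q * z ≤ t * B :=
        le_trans (by nlinarith [hz.2, mul_nonneg (by linarith : (0:ℝ) ≤ t+1) hq]) hy
      have := Real.rpow_nonneg hzpos.le (t - 1)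
      nlinarith
  exact hmono (Set.left_mem_Icc.mpr hxy) (Set.right_mem_Icc.mpr hxy) hxy

lemma aux_anti (t B q : ℝ) (ht : 0 < t) (hq : 0 ≤ q) {x y : ℝ}
    (hx : 0 ≤ x) (hxy : x ≤ y) (hy : t * B ≤ (t + 1) * q * x) :
    y ^ t * (B - q * y) ≤ x ^ t * (B - q * x) := by
  have hanti : AntitoneOn (fun x : ℝ => x ^ t * (B - q * x)) (Set.Icc x y) := by
    apply antitoneOn_of_deriv_nonpos (convex_Icc x y) ((aux_cont t B q ht).continuousOn)
    · intro z hz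
      rw [interior_Icc] at hz
      exact (aux_hasDeriv t B q z (hx.trans_lt hz.1)).differentiableAt.differentiableWithinAt
    · intro z hz
      rw [interior_Icc] at hz
      have hzpos : 0 < z := hx.trans_lt hz.1
      rw [(aux_hasDeriv t B q z hzpos).deriv]
      have : t * B ≤ (t + 1) * q * z :=
        le_trans hy (by nlinarith [hz.1, mul_nonneg (by linarith : (0:ℝ) ≤ t+1) hq])
      have := Real.rpow_nonneg hzpos.le (t - 1)
      nlinarith
  exact hanti (Set.left_mem_Icc.mpr hxy) (Set.right_mem_Icc.mpr hxy) hxy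

set_option maxHeartbeats 1000000 in
/-- If d₀^M ≥ μ/(1 + τ_min) and c_i ≥ n − 1 for all i, then the affine intervention rule
with target equal to the socially optimal profile d*_i = t_i μ/(n + Σ_k t_k) sustains d*
without intervention. -/
theorem stmt_11 (n : ℕ) (hn : 1 ≤ n) (μ : ℝ) (hμ : 0 < μ)
    (τmin : ℝ) (hτmin : 0 < τmin)
    (t : Fin n → ℝ) (ht : ∀ i, τmin ≤ t i)
    (dstar : Fin n → ℝ)
    (hdstar : ∀ i, dstar i = t i * μ / ((n : ℝ) + ∑ k, t k))
    (d0M : ℝ) (hd0M : μ / (1 + τmin) ≤ d0M)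
    (c : Fin n → ℝ) (hc : ∀ i, (n : ℝ) - 1 ≤ c i)
    (f : (Fin n → ℝ) → ℝ)
    (hf : ∀ d, f d = min (max (∑ k, c k * (d k - dstar k)) 0) d0M) :
    f dstar = 0 ∧
    ∀ i, ∀ x ∈ Set.Icc (0 : ℝ) μ,
      x ^ t i * (μ - x - (∑ k ∈ Finset.univ.erase i, dstar k)
          - f (Function.update dstar i x)) ≤
        dstar i ^ t i * (μ - ∑ k, dstar k) := by
  have hn1 : (1:ℝ) ≤ (n:ℝ) := by exact_mod_cast hn
  have hd0M0 : 0 ≤ d0M := le_trans (div_pos hμ (by linarith)).le hd0M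
  set T : ℝ := ∑ k, t k with hT
  have hTmin : (n:ℝ) * τmin ≤ T := by
    have := Finset.card_nsmul_le_sum Finset.univ t τmin (fun i _ => ht i)
    simpa [nsmul_eq_mul] using this
  have hS : 0 < (n:ℝ) + T := by nlinarith
  constructor
  · rw [hf]; simp [min_eq_left hd0M0]
  intro i x hx
  have hti : 0 < t i := lt_of_lt_of_le hτmin (ht i)
  have hc0 : 0 ≤ c i := le_trans (by linarith) (hc i)
  have hd : dstar i = t i * μ / ((n:ℝ) + T) := hdstar i
  have hdnn : 0 ≤ dstar i := by
    rw [hd]; positivity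
  have hsum : ∑ k, dstar k = T * μ / ((n:ℝ) + T) := by
    rw [hT, Finset.sum_mul, Finset.sum_div]
    exact Finset.sum_congr rfl fun k _ => hdstar k
  have herase : (∑ k ∈ Finset.univ.erase i, dstar k) = ∑ k, dstar k - dstar i :=
    Finset.sum_erase_eq_sub (Finset.mem_univ i)
  have hmargin : μ - ∑ k, dstar k = (n:ℝ) * μ / ((n:ℝ) + T) := by
    rw [hsum]; field_simp; ring
  set A : ℝ := ((n:ℝ) + t i) * μ / ((n:ℝ) + T) with hA
  have hAe : μ - (∑ k ∈ Finset.univ.erase i, dstar k) = A := by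
    rw [herase, hsum, hd, hA]; field_simp; ring
  have hAd : A - dstar i = μ - ∑ k, dstar k := by
    rw [hmargin, hA, hd]; field_simp; ring
  have hfval : f (Function.update dstar i x) = min (max (c i * (x - dstar i)) 0) d0M := by
    rw [hf]
    congr 2
    rw [Finset.sum_eq_single i]
    · simp
    · intro k _ hk; simp [Function.update_of_ne hk]
    · intro h; exact absurd (Finset.mem_univ i) h
  rcases le_or_gt x (dstar i) with hxd | hxd
  · -- no intervention
    have hfz : f (Function.update dstar i x) = 0 := by
      rw [hfval, max_eq_right (show c i * (x - dstar i) ≤ 0 by nlinarith),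
        min_eq_left hd0M0]
    have h2 : (t i + 1) * (t i * μ) ≤ t i * (((n:ℝ) + t i) * μ) := by
      nlinarith [mul_pos hti hμ]
    have hside : (t i + 1) * 1 * dstar i ≤ t i * A := by
      rw [mul_one, hd, hA]
      calc (t i + 1) * (t i * μ / ((n:ℝ) + T))
          = (t i + 1) * (t i * μ) / ((n:ℝ) + T) := by ring
        _ ≤ t i * (((n:ℝ) + t i) * μ) / ((n:ℝ) + T) := by gcongr
        _ = t i * (((n:ℝ) + t i) * μ / ((n:ℝ) + T)) := by ring
    have key := aux_mono (t i) A 1 hti zero_le_one hx.1 hxd hside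
    have e1 : μ - x - (∑ k ∈ Finset.univ.erase i, dstar k)
        - f (Function.update dstar i x) = A - 1 * x := by
      rw [hfz]; linarith [hAe]
    have e2 : μ - ∑ k, dstar k = A - 1 * dstar i := by linarith [hAd]
    rw [e1, e2]; exact key
  · have hmaxeq : f (Function.update dstar i x)
        = min (c i * (x - dstar i)) d0M := by
      rw [hfval, max_eq_left (show 0 ≤ c i * (x - dstar i) by nlinarith)]
    rcases le_or_gt d0M (c i * (x - dstar i)) with hcap | hcap
    · -- capped: bracket is non-positive
      have hfv : f (Function.update dstar i x) = d0M := by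
        rw [hmaxeq, min_eq_right hcap]
      have hnS : (n:ℝ) * μ / ((n:ℝ) + T) ≤ μ / (1 + τmin) := by
        rw [div_le_div_iff₀ hS (by linarith)]
        nlinarith [mul_le_mul_of_nonneg_left hTmin hμ.le]
      have hAdn : A - dstar i = (n:ℝ) * μ / ((n:ℝ) + T) := by
        rw [hAd, hmargin]
      have hbr : μ - x - (∑ k ∈ Finset.univ.erase i, dstar k)
          - f (Function.update dstar i x) ≤ 0 := by
        rw [hfv]; linarith [hAe, hAdn]
      have hL : x ^ t i * (μ - x - (∑ k ∈ Finset.univ.erase i, dstar k)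
          - f (Function.update dstar i x)) ≤ 0 :=
        mul_nonpos_of_nonneg_of_nonpos (Real.rpow_nonneg hx.1 _) hbr
      have hR : 0 ≤ dstar i ^ t i * (μ - ∑ k, dstar k) := by
        apply mul_nonneg (Real.rpow_nonneg hdnn _)
        rw [hmargin]; positivity
      linarith
    · have hfv : f (Function.update dstar i x) = c i * (x - dstar i) := by
        rw [hmaxeq, min_eq_left hcap.le]
      set B : ℝ := A + c i * dstar i with hB
      have h3 : 0 ≤ t i * μ * (1 + c i - (n:ℝ)) :=
        mul_nonneg (mul_pos hti hμ).le (by linarith [hc i])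
      have h2 : t i * (((n:ℝ) + t i) * μ + c i * (t i * μ))
          ≤ (t i + 1) * (1 + c i) * (t i * μ) := by nlinarith [h3]
      have hside : t i * B ≤ (t i + 1) * (1 + c i) * dstar i := by
        rw [hB, hA, hd]
        calc t i * (((n:ℝ) + t i) * μ / ((n:ℝ) + T) + c i * (t i * μ / ((n:ℝ) + T)))
            = t i * (((n:ℝ) + t i) * μ + c i * (t i * μ)) / ((n:ℝ) + T) := by ring
          _ ≤ (t i + 1) * (1 + c i) * (t i * μ) / ((n:ℝ) + T) := by gcongr
          _ = (t i + 1) * (1 + c i) * (t i * μ / ((n:ℝ) + T)) := by ring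
      have key := aux_anti (t i) B (1 + c i) hti (by linarith) hdnn hxd.le hside
      have e1 : μ - x - (∑ k ∈ Finset.univ.erase i, dstar k)
          - f (Function.update dstar i x) = B - (1 + c i) * x := by
        rw [hfv, hB]; linarith [hAe]
      have e2 : μ - ∑ k, dstar k = B - (1 + c i) * dstar i := by
        rw [hB]; linarith [hAd]
      rw [e1, e2]; exact key
end

section
/- Let a > 0 and τ > 0 and define f(x) = ((a + τx)/(a + τ))^{τ+1} · x^{−τ} for x > 0. Then f(1) = 1; f is differentiable on (0, ∞) with f'(x) = τ x^{−τ−1} ((a + τx)/(a + τ))^{τ} (x − a)/(a + τ); f is strictly decreasing on (0, a] and strictly increasing on [a, ∞). -/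
/-- For a > 0 and τ > 0, the function f(x) = ((a + τx)/(a + τ))^{τ+1} x^{−τ} on (0,∞)
satisfies f(1) = 1, has derivative f'(x) = τ x^{−τ−1} ((a + τx)/(a + τ))^{τ} (x − a)/(a + τ),
is strictly decreasing on (0, a] and strictly increasing on [a, ∞). -/
theorem stmt_13 (a τ : ℝ) (ha : 0 < a) (hτ : 0 < τ)
    (f : ℝ → ℝ) (hf : ∀ x, f x = ((a + τ * x) / (a + τ)) ^ (τ + 1) * x ^ (-τ)) :
    f 1 = 1 ∧
    (∀ x : ℝ, 0 < x →
      HasDerivAt f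
        (τ * x ^ (-τ - 1) * ((a + τ * x) / (a + τ)) ^ τ * ((x - a) / (a + τ))) x) ∧
    StrictAntiOn f (Set.Ioc 0 a) ∧
    StrictMonoOn f (Set.Ici a) := by
  have haτ : 0 < a + τ := by linarith
  have hderiv : ∀ x : ℝ, 0 < x →
      HasDerivAt f
        (τ * x ^ (-τ - 1) * ((a + τ * x) / (a + τ)) ^ τ * ((x - a) / (a + τ))) x := by
    intro x hx
    have hu : 0 < (a + τ * x) / (a + τ) := by positivity
    have h1 : HasDerivAt (fun x : ℝ => (a + τ * x) / (a + τ)) (τ / (a + τ)) x := by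
      simpa using (((hasDerivAt_id x).const_mul τ).const_add a).div_const (a + τ)
    have h2 : HasDerivAt (fun x : ℝ => ((a + τ * x) / (a + τ)) ^ (τ + 1))
        (τ / (a + τ) * (τ + 1) * ((a + τ * x) / (a + τ)) ^ (τ + 1 - 1)) x :=
      h1.rpow_const (Or.inl hu.ne')
    have h3 : HasDerivAt (fun x : ℝ => x ^ (-τ)) (-τ * x ^ (-τ - 1)) x :=
      Real.hasDerivAt_rpow_const (Or.inl hx.ne')
    have h4 : HasDerivAt (fun x : ℝ => ((a + τ * x) / (a + τ)) ^ (τ + 1) * x ^ (-τ)) _ x :=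
      h2.mul h3
    have hfun : f = fun x => ((a + τ * x) / (a + τ)) ^ (τ + 1) * x ^ (-τ) :=
      funext hf
    rw [hfun]
    convert h4 using 1
    have e1 : ((a + τ * x) / (a + τ)) ^ (τ + 1) =
        ((a + τ * x) / (a + τ)) ^ τ * ((a + τ * x) / (a + τ)) := by
      rw [Real.rpow_add hu, Real.rpow_one]
    have e2 : x ^ (-τ) = x ^ (-τ - 1) * x := by
      rw [← Real.rpow_add_one hx.ne' (-τ - 1)]; ring_nf
    rw [e1, e2]
    have : τ + 1 - 1 = τ := by ring
    rw [this]
    field_simp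
    ring
  refine ⟨?_, hderiv, ?_, ?_⟩
  · rw [hf 1]
    rw [mul_one, div_self haτ.ne', Real.one_rpow, Real.one_rpow, mul_one]
  · apply strictAntiOn_of_deriv_neg (convex_Ioc 0 a)
    · intro x hx
      exact ((hderiv x hx.1).continuousAt).continuousWithinAt
    · intro x hx
      rw [interior_Ioc] at hx
      rw [(hderiv x hx.1).deriv]
      have hx0 : 0 < x := hx.1
      have hu : 0 < (a + τ * x) / (a + τ) := div_pos (by nlinarith) haτ
      have h1 : 0 < x ^ (-τ - 1) := Real.rpow_pos_of_pos hx.1 _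
      have h2 : 0 < ((a + τ * x) / (a + τ)) ^ τ := Real.rpow_pos_of_pos hu _
      have h3 : (x - a) / (a + τ) < 0 := div_neg_of_neg_of_pos (by linarith [hx.2]) haτ
      nlinarith [mul_pos (mul_pos hτ h1) h2]
  · apply strictMonoOn_of_deriv_pos (convex_Ici a)
    · intro x hx
      have hx0 : 0 < x := lt_of_lt_of_le ha hx
      exact ((hderiv x hx0).continuousAt).continuousWithinAt
    · intro x hx
      rw [interior_Ici] at hx
      have hx0 : 0 < x := lt_trans ha hx
      rw [(hderiv x hx0).deriv]
      have hu : 0 < (a + τ * x) / (a + τ) := by positivity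
      have h1 : 0 < x ^ (-τ - 1) := Real.rpow_pos_of_pos hx0 _
      have h2 : 0 < ((a + τ * x) / (a + τ)) ^ τ := Real.rpow_pos_of_pos hu _
      have hxa : a < x := Set.mem_Ioi.mp hx
      have h3 : 0 < (x - a) / (a + τ) := div_pos (by linarith) haτ
      positivity
end

section
/- Let a ≥ 1 and τ > 0 and define f(x) = ((a + τx)/(a + τ))^{τ+1} · x^{−τ} for x > 0. Then f(x) ≥ 1 for every x with 0 < x ≤ 1. -/
/-- For a ≥ 1 and τ > 0, the function f(x) = ((a + τx)/(a + τ))^{τ+1} x^{−τ} satisfies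
f(x) ≥ 1 for every x with 0 < x ≤ 1: a user never gains by under-reporting its type. -/
theorem stmt_14 (a τ : ℝ) (ha : 1 ≤ a) (hτ : 0 < τ) :
    ∀ x : ℝ, 0 < x → x ≤ 1 →
      1 ≤ ((a + τ * x) / (a + τ)) ^ (τ + 1) * x ^ (-τ) := by
  intro x hx hx1
  have ha0 : (0:ℝ) < a := lt_of_lt_of_le one_pos ha
  have haτ : (0:ℝ) < a + τ := by linarith
  -- weighted AM-GM: x^(τ/(a+τ)) ≤ (a + τx)/(a+τ)
  have hamgm : x ^ (τ / (a + τ)) ≤ (a + τ * x) / (a + τ) := by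
    have := Real.geom_mean_le_arith_mean2_weighted
      (w₁ := a / (a + τ)) (w₂ := τ / (a + τ)) (p₁ := 1) (p₂ := x)
      (by positivity) (by positivity) zero_le_one hx.le
      (by field_simp)
    rw [Real.one_rpow, one_mul] at this
    calc x ^ (τ / (a + τ)) ≤ a / (a + τ) * 1 + τ / (a + τ) * x := this
      _ = (a + τ * x) / (a + τ) := by field_simp
  have hbase : (0:ℝ) ≤ x ^ (τ / (a + τ)) := (Real.rpow_pos_of_pos hx _).le
  have h2 : (x ^ (τ / (a + τ))) ^ (τ + 1) ≤ ((a + τ * x) / (a + τ)) ^ (τ + 1) :=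
    Real.rpow_le_rpow hbase hamgm (by linarith)
  rw [← Real.rpow_mul hx.le] at h2
  have h3 : x ^ τ ≤ x ^ (τ / (a + τ) * (τ + 1)) := by
    apply Real.rpow_le_rpow_of_exponent_ge hx hx1
    rw [div_mul_eq_mul_div, div_le_iff₀ haτ]
    nlinarith
  have h4 : x ^ τ ≤ ((a + τ * x) / (a + τ)) ^ (τ + 1) := le_trans h3 h2
  have hxneg : (0:ℝ) < x ^ (-τ) := Real.rpow_pos_of_pos hx _
  calc (1:ℝ) = x ^ τ * x ^ (-τ) := by
        rw [← Real.rpow_add hx]; simp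
    _ ≤ ((a + τ * x) / (a + τ)) ^ (τ + 1) * x ^ (-τ) :=
        mul_le_mul_of_nonneg_right h4 hxneg.le
end

section
/- Let a > 1 and τ > 0 and define f(x) = ((a + τx)/(a + τ))^{τ+1} · x^{−τ} for x > 0. If x₀ > 1 and f(x₀) ≥ 1, then f(x) ≥ 1 for every x ≥ x₀. -/
/-- For a > 1 and τ > 0 and f(x) = ((a + τx)/(a + τ))^{τ+1} x^{−τ}: if x₀ > 1 and
f(x₀) ≥ 1, then f(x) ≥ 1 for every x ≥ x₀. -/
theorem stmt_15 (a τ : ℝ) (ha : 1 < a) (hτ : 0 < τ)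
    (f : ℝ → ℝ) (hf : ∀ x, f x = ((a + τ * x) / (a + τ)) ^ (τ + 1) * x ^ (-τ))
    (x₀ : ℝ) (hx₀ : 1 < x₀) (hfx₀ : 1 ≤ f x₀) :
    ∀ x : ℝ, x₀ ≤ x → 1 ≤ f x := by
  have ha0 : (0:ℝ) < a := lt_trans one_pos ha
  set g : ℝ → ℝ := fun x => (τ+1) * Real.log (a + τ*x) - (τ+1) * Real.log (a + τ)
      - τ * Real.log x with hg
  -- positivity facts
  have hden : ∀ x : ℝ, 0 < x → 0 < a + τ*x := fun x hx => by positivity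
  have haτ : (0:ℝ) < a + τ := by positivity
  -- derivative of g
  have hderiv : ∀ x : ℝ, 0 < x → HasDerivAt g (τ*(x-a)/(x*(a+τ*x))) x := by
    intro x hx
    have h1 : HasDerivAt (fun y : ℝ => a + τ*y) τ x := by
      simpa using ((hasDerivAt_id x).const_mul τ).const_add a
    have h2 : HasDerivAt (fun y : ℝ => Real.log (a + τ*y)) (τ / (a + τ*x)) x :=
      h1.log (ne_of_gt (hden x hx))
    have h3 : HasDerivAt Real.log x⁻¹ x := Real.hasDerivAt_log (ne_of_gt hx)
    have h4 : HasDerivAt g ((τ+1) * (τ / (a + τ*x)) - τ * x⁻¹) x := by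
      exact ((h2.const_mul (τ+1)).sub_const _).sub (h3.const_mul τ)
    convert h4 using 1
    have hx' : x ≠ 0 := ne_of_gt hx
    have hd : a + τ*x ≠ 0 := ne_of_gt (hden x hx)
    field_simp
    ring
  -- f x = exp (g x) for x > 0
  have hfe : ∀ x : ℝ, 0 < x → f x = Real.exp (g x) := by
    intro x hx
    have hb : (0:ℝ) < (a + τ*x) / (a + τ) := div_pos (hden x hx) haτ
    rw [hf x, Real.rpow_def_of_pos hb, Real.rpow_def_of_pos hx, ← Real.exp_add, hg]
    rw [Real.log_div (ne_of_gt (hden x hx)) (ne_of_gt haτ)]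
    ring_nf
  have hg1 : g 1 = 0 := by simp [hg]
  -- g x₀ ≥ 0
  have hgx₀ : 0 ≤ g x₀ := by
    have := hfx₀
    rw [hfe x₀ (lt_trans one_pos hx₀)] at this
    exact (Real.one_le_exp_iff).mp this
  -- x₀ ≥ a : otherwise g strictly decreasing on [1, x₀] gives g x₀ < 0
  have hax₀ : a ≤ x₀ := by
    by_contra hlt
    push_neg at hlt
    have hanti : StrictAntiOn g (Set.Icc 1 x₀) := by
      apply strictAntiOn_of_deriv_neg (convex_Icc 1 x₀)
      · intro y hy
        exact (hderiv y (lt_of_lt_of_le one_pos hy.1)).continuousAt.continuousWithinAt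
      · intro y hy
        rw [interior_Icc] at hy
        have hy0 : 0 < y := lt_trans one_pos hy.1
        rw [(hderiv y hy0).deriv]
        have hya : y < a := lt_trans hy.2 hlt
        apply div_neg_of_neg_of_pos
        · have : y - a < 0 := by linarith
          exact mul_neg_of_pos_of_neg hτ this
        · exact mul_pos hy0 (hden y hy0)
    have h := hanti (Set.left_mem_Icc.mpr (le_of_lt hx₀))
      (Set.right_mem_Icc.mpr (le_of_lt hx₀)) hx₀
    rw [hg1] at h
    linarith
  -- g monotone on [x₀, ∞)
  have hmono : MonotoneOn g (Set.Ici x₀) := by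
    apply monotoneOn_of_deriv_nonneg (convex_Ici x₀)
    · intro y hy
      exact (hderiv y (lt_trans one_pos (lt_of_lt_of_le hx₀ hy))).continuousAt.continuousWithinAt
    · intro y hy
      rw [interior_Ici] at hy
      exact (hderiv y (lt_trans one_pos (lt_trans hx₀ hy))).differentiableAt.differentiableWithinAt
    · intro y hy
      rw [interior_Ici] at hy
      have hy0 : 0 < y := lt_trans one_pos (lt_trans hx₀ hy)
      rw [(hderiv y hy0).deriv]
      apply div_nonneg
      · have : 0 ≤ y - a := by linarith [lt_of_le_of_lt hax₀ hy]
        positivity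
      · positivity
  intro x hx
  have hx0 : 0 < x := lt_of_lt_of_le (lt_trans one_pos hx₀) hx
  rw [hfe x hx0]
  rw [Real.one_le_exp_iff]
  have := hmono (Set.self_mem_Ici) (Set.mem_Ici.mpr hx) hx
  linarith
end

section
/- Let a > 1 and τ > 0 and define f(x) = ((a + τx)/(a + τ))^{τ+1} · x^{−τ} for x > 0. Then f(x) < 1 for every x with 1 < x < a. -/
/-- For a > 1 and τ > 0, the function f(x) = ((a + τx)/(a + τ))^{τ+1} x^{−τ} satisfies
f(x) < 1 for every x with 1 < x < a: a user always strictly gains by slightly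
over-reporting its type. -/
theorem stmt_16 (a τ : ℝ) (ha : 1 < a) (hτ : 0 < τ) :
    ∀ x : ℝ, 1 < x → x < a →
      ((a + τ * x) / (a + τ)) ^ (τ + 1) * x ^ (-τ) < 1 := by
  intro x hx1 hxa
  have hx0 : (0:ℝ) < x := lt_trans one_pos hx1
  have hτ1 : (0:ℝ) < τ + 1 := by linarith
  have hτx : (0:ℝ) < τ + x := by linarith
  have haτ : (0:ℝ) < a + τ := by linarith
  have haτx : (0:ℝ) < a + τ * x := by nlinarith
  -- Step 1: (a+τx)/(a+τ) < (τ+1)x/(τ+x)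
  have h1 : (a + τ * x) / (a + τ) < (τ + 1) * x / (τ + x) := by
    rw [div_lt_div_iff₀ haτ hτx]
    nlinarith [mul_pos (sub_pos.mpr hxa) (sub_pos.mpr hx1)]
  -- Step 2 (AM-GM on 1/x): (τ+1)x/(τ+x) ≤ x^{τ/(τ+1)}
  have hw : τ / (τ + 1) + 1 / (τ + 1) = 1 := by field_simp
  have hgm := Real.geom_mean_le_arith_mean2_weighted
    (le_of_lt (div_pos hτ hτ1)) (le_of_lt (div_pos one_pos hτ1))
    (le_of_lt (inv_pos.mpr hx0)) zero_le_one hw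
  have hxp : (0:ℝ) < x ^ (τ / (τ + 1)) := Real.rpow_pos_of_pos hx0 _
  have h2 : (τ + 1) * x / (τ + x) ≤ x ^ (τ / (τ + 1)) := by
    have hL : (x⁻¹) ^ (τ / (τ + 1)) * (1:ℝ) ^ (1 / (τ + 1))
        = (x ^ (τ / (τ + 1)))⁻¹ := by
      rw [Real.one_rpow, mul_one, Real.inv_rpow hx0.le]
    have hR : τ / (τ + 1) * x⁻¹ + 1 / (τ + 1) * 1 = (τ + x) / ((τ + 1) * x) := by
      field_simp
    rw [hL, hR] at hgm
    have := inv_anti₀ (inv_pos.mpr hxp) hgm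
    rwa [inv_inv, inv_div] at this
  -- Step 3: raise to the power τ+1
  have h3 : ((a + τ * x) / (a + τ)) ^ (τ + 1) < x ^ τ := by
    have hbase : (a + τ * x) / (a + τ) < x ^ (τ / (τ + 1)) := lt_of_lt_of_le h1 h2
    have := Real.rpow_lt_rpow (by positivity) hbase hτ1
    rwa [← Real.rpow_mul hx0.le, div_mul_cancel₀ τ (ne_of_gt hτ1)] at this
  have hxt : (0:ℝ) < x ^ τ := Real.rpow_pos_of_pos hx0 _
  rw [Real.rpow_neg hx0.le, mul_inv_lt_iff₀' hxt, mul_one]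
  exact h3
end

section
/- Let n ≥ 1, μ > 0, and let T = {τ_1, …, τ_m} with 0 < τ_1 < τ_2 < … < τ_m. For a true type τ ∈ T, a reported type τ̂ ∈ T, and other users' types (t_j)_{j≠i} ∈ T^{n−1} with S = Σ_{j≠i} t_j, define the honest-allocation payoff W(τ, τ̂, S) = ( τ̂ μ / (n + S + τ̂) )^{τ} · ( μ − τ̂ μ / (n + S + τ̂) − Σ_{j≠i} t_j μ / (n + S + τ̂) ). Suppose that for every l ∈ {1, …, m−1} and every S that is a sum of n−1 elements of T: ( (n + S + τ_{l+1}) / (n + S + τ_l) )^{τ_l + 1} · ( τ_l / τ_{l+1} )^{τ_l} ≥ 1. Then for every τ, τ̂ ∈ T and every (t_j)_{j≠i} ∈ T^{n−1}: W(τ, τ, S) ≥ W(τ, τ̂, S); i.e., truthfully reporting one's type maximizes the payoff under the socially optimal allocation. -/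
/-- In the flow control game with type set T = {τ_1 < … < τ_m}, if for every pair of
consecutive types and every possible sum S of n−1 types the incentive-compatibility
condition ((n+S+τ_{l+1})/(n+S+τ_l))^{τ_l+1} (τ_l/τ_{l+1})^{τ_l} ≥ 1 holds, then
truthfully reporting one's type maximizes the payoff W under the socially optimal
allocation. -/
theorem stmt_17 (n m : ℕ) (hn : 1 ≤ n) (μ : ℝ) (hμ : 0 < μ)
    (τ : Fin m → ℝ) (hτpos : ∀ l, 0 < τ l) (hτmono : StrictMono τ)
    (W : ℝ → ℝ → ℝ → ℝ)
    (hW : ∀ a b S, W a b S =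
      (b * μ / ((n : ℝ) + S + b)) ^ a *
        (μ - b * μ / ((n : ℝ) + S + b) - S * μ / ((n : ℝ) + S + b)))
    (hyp : ∀ (l : ℕ) (hl : l + 1 < m) (u : Fin (n - 1) → Fin m),
      1 ≤ (((n : ℝ) + (∑ j, τ (u j)) + τ ⟨l + 1, hl⟩) /
            ((n : ℝ) + (∑ j, τ (u j)) + τ ⟨l, by omega⟩)) ^ (τ ⟨l, by omega⟩ + 1) *
          (τ ⟨l, by omega⟩ / τ ⟨l + 1, hl⟩) ^ (τ ⟨l, by omega⟩)) :
    ∀ (a b : Fin m) (u : Fin (n - 1) → Fin m),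
      W (τ b) (τ a) (∑ j, τ (u j)) ≤ W (τ b) (τ b) (∑ j, τ (u j)) := by
  intro a b u
  set S : ℝ := ∑ j, τ (u j) with hSdef
  have hS0 : 0 ≤ S := Finset.sum_nonneg fun j _ => (hτpos _).le
  have hn1 : (1:ℝ) ≤ (n:ℝ) := by exact_mod_cast hn
  set N : ℝ := (n:ℝ) + S with hNdef
  have hN1 : (1:ℝ) ≤ N := by simp only [hNdef]; linarith
  have hN0 : (0:ℝ) < N := lt_of_lt_of_le one_pos hN1
  set c : ℝ := τ b with hcdef
  have hc : 0 < c := hτpos b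
  set F : ℝ → ℝ := fun x => c * Real.log x - (c + 1) * Real.log (N + x) with hFdef
  have hnpos : (0:ℝ) < (n:ℝ) := lt_of_lt_of_le one_pos hn1
  -- rewrite W through exp
  have hWexp : ∀ x : ℝ, 0 < x →
      W c x S = Real.exp (F x + (c * Real.log μ + Real.log ((n:ℝ) * μ))) := by
    intro x hx
    have hNx : 0 < N + x := by linarith
    have hbase : 0 < x * μ / (N + x) := by positivity
    have hsecond : μ - x * μ / (N + x) - S * μ / (N + x) = (n:ℝ) * μ / (N + x) := by
      rw [hNdef]; field_simp; ring
    have hNSx : (n:ℝ) + S + x = N + x := by rw [hNdef]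
    rw [hW, hNSx, hsecond, Real.rpow_def_of_pos hbase, ← Real.exp_log (show
      (0:ℝ) < (n:ℝ) * μ / (N + x) by positivity), ← Real.exp_add]
    congr 1
    rw [Real.log_div (by positivity) hNx.ne', Real.log_mul hx.ne' hμ.ne',
      Real.log_div (by positivity) hNx.ne', hFdef]
    ring
  -- key monotonicity on (0, c]
  have mono : ∀ x y : ℝ, 0 < x → x ≤ y → y ≤ c → F x ≤ F y := by
    intro x y hx hxy hyc
    have hderiv : ∀ z ∈ Set.Icc x y, HasDerivAt F (c * z⁻¹ - (c + 1) * (N + z)⁻¹) z := by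
      intro z hz
      have hz0 : 0 < z := lt_of_lt_of_le hx hz.1
      have hNz : 0 < N + z := by linarith
      have h1 : HasDerivAt (fun w : ℝ => Real.log w) z⁻¹ z := Real.hasDerivAt_log hz0.ne'
      have h2 : HasDerivAt (fun w : ℝ => N + w) 1 z := (hasDerivAt_id z).const_add N
      have h3 : HasDerivAt (fun w : ℝ => Real.log (N + w)) (1 / (N + z)) z := by
        simpa using h2.log hNz.ne'
      have := (h1.const_mul c).sub (h3.const_mul (c + 1))
      have h5 : HasDerivAt F (c * z⁻¹ - (c + 1) * (1 / (N + z))) z := this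
      simpa [one_div] using h5
    have hmono : MonotoneOn F (Set.Icc x y) := by
      apply monotoneOn_of_deriv_nonneg (convex_Icc x y)
      · exact fun z hz => (hderiv z hz).continuousAt.continuousWithinAt
      · intro z hz
        rw [interior_Icc] at hz
        exact ((hderiv z (Set.mem_Icc_of_Ioo hz)).differentiableAt).differentiableWithinAt
      · intro z hz
        rw [interior_Icc] at hz
        rw [(hderiv z (Set.mem_Icc_of_Ioo hz)).deriv]
        have hz0 : 0 < z := lt_of_lt_of_le hx (le_of_lt hz.1)
        have hNz : 0 < N + z := by linarith
        have hzc : z ≤ c := le_trans (le_of_lt hz.2) hyc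
        rw [sub_nonneg, ← div_eq_mul_inv, ← div_eq_mul_inv, div_le_div_iff₀ hNz hz0]
        nlinarith
    exact hmono (Set.left_mem_Icc.2 hxy) (Set.right_mem_Icc.2 hxy) hxy
  -- chain step from the hypothesis
  have step : ∀ (l : ℕ) (hl : l + 1 < m), (b : ℕ) ≤ l →
      F (τ ⟨l + 1, hl⟩) ≤ F (τ ⟨l, by omega⟩) := by
    intro l hl hbl
    set x : ℝ := τ ⟨l, by omega⟩ with hxdef
    set y : ℝ := τ ⟨l + 1, hl⟩ with hydef
    have hx : 0 < x := hτpos _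
    have hxy : x < y := hτmono (show (⟨l, by omega⟩ : Fin m) < ⟨l + 1, hl⟩ by
      simp [Fin.lt_def])
    have hy : 0 < y := lt_trans hx hxy
    have hcx : c ≤ x := by
      rcases eq_or_lt_of_le hbl with h | h
      · exact le_of_eq (by rw [hcdef, hxdef]; congr 1; exact Fin.ext h)
      · exact le_of_lt (hτmono (show b < (⟨l, by omega⟩ : Fin m) by
          rw [Fin.lt_def]; exact h))
    have hNx : 0 < N + x := by linarith
    have hNy : 0 < N + y := by linarith
    have hr : 0 < (N + y) / (N + x) := by positivity
    have hs : 0 < x / y := by positivity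
    have hhyp := hyp l hl u
    have hNS : (n:ℝ) + S + y = N + y := by rw [hNdef]
    have hNS' : (n:ℝ) + S + x = N + x := by rw [hNdef]
    rw [← hSdef, ← hxdef, ← hydef, hNS, hNS'] at hhyp
    have hlog : 0 ≤ (x + 1) * Real.log ((N + y) / (N + x)) + x * Real.log (x / y) := by
      have := Real.log_le_log (by norm_num) hhyp
      rw [Real.log_one, Real.log_mul (by positivity) (by positivity),
        Real.log_rpow hr, Real.log_rpow hs] at this
      linarith
    set A : ℝ := Real.log ((N + y) / (N + x)) with hAdef
    set B : ℝ := Real.log (x / y) with hBdef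
    have hAB : A + B ≤ 0 := by
      rw [hAdef, hBdef, ← Real.log_mul hr.ne' hs.ne']
      apply Real.log_nonpos (by positivity)
      rw [div_mul_div_comm, div_le_one (by positivity)]
      nlinarith
    have hFeq : F x - F y = (c + 1) * A + c * B := by
      rw [hFdef, hAdef, hBdef, Real.log_div hNy.ne' hNx.ne', Real.log_div hx.ne' hy.ne']
      ring
    have : 0 ≤ (c + 1) * A + c * B := by nlinarith
    linarith
  -- chain: for all k ≥ b, F (τ k) ≤ F (τ b)
  have chain : ∀ k : ℕ, (b : ℕ) ≤ k → ∀ hk : k < m, F (τ ⟨k, hk⟩) ≤ F (τ b) := by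
    intro k hk
    induction k, hk using Nat.le_induction with
    | base => intro hk; exact le_of_eq (by congr 1)
    | succ k hbk ih =>
      intro hk1
      have hk : k < m := by omega
      exact le_trans (step k hk1 hbk) (ih hk)
  -- conclude
  have key : F (τ a) ≤ F (τ b) := by
    rcases le_or_gt a b with h | h
    · exact mono (τ a) (τ b) (hτpos a) (hτmono.monotone h) le_rfl
    · have : (b : ℕ) ≤ (a : ℕ) := le_of_lt h
      have := chain (a : ℕ) this a.isLt
      simpa using this
  rw [hWexp (τ a) (hτpos a), hWexp (τ b) (hτpos b)]
  exact Real.exp_le_exp.mpr (by rw [← hcdef]; linarith)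
end
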